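/- arXiv:2603.20814 — 3 statements merged into one kernel-verified Lean document; each statement's English description precedes it below -/
import Mathlib

section
/- Let p > 1 and let G be a finite simple connected graph on n ≥ 4 vertices whose boundary B(G) (the set of vertices of degree one) is nonempty. Then λ_{1,p}(G) ≥ λ_{1,p}(T_{n,3}), where T_{n,3} is the tadpole graph on n vertices with head of size 3. -/
open scoped Classical

noncomputable section

/-- The term `|f x - f y| ^ p` as a function on unordered pairs. -/
noncomputable def edgeTerm {V : Type*} (p : ℝ) (f : V → ℝ) : Sym2 V → ℝ :=
  Sym2.lift ⟨fun x y => |f x - f y| ^ p, fun x y => by dsimp only; rw [abs_sub_comm]⟩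

/-- The `p`-Rayleigh quotient of a function on a finite graph. -/
noncomputable def rayleigh {V : Type*} [Fintype V] [DecidableEq V] (G : SimpleGraph V)
    (p : ℝ) (f : V → ℝ) : ℝ :=
  (∑ e ∈ G.edgeFinset, edgeTerm p f e) / ∑ v, |f v| ^ p

/-- The first `p`-Dirichlet eigenvalue: infimum of the Rayleigh quotient over nonzero
functions vanishing on the boundary (vertices of degree one). -/
noncomputable def lambda1 {V : Type*} [Fintype V] [DecidableEq V] (G : SimpleGraph V)
    (p : ℝ) : ℝ :=
  sInf {r | ∃ f : V → ℝ, f ≠ 0 ∧ (∀ v, G.degree v = 1 → f v = 0) ∧ r = rayleigh G p f}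

/-- The tadpole graph `T_{n,i}` on vertices `0,…,n-1` (vertex `t_k` is `k-1`):
edges `t_k t_{k+1}` for `1 ≤ k ≤ n-1` together with the edge `t_1 t_i`. -/
def tadpole (n i : ℕ) : SimpleGraph (Fin n) :=
  SimpleGraph.fromRel (fun a b => a.val + 1 = b.val ∨ (a.val = 0 ∧ b.val = i - 1))

/-- The path graph on `n` vertices `0,…,n-1`. -/
def pathG (n : ℕ) : SimpleGraph (Fin n) :=
  SimpleGraph.fromRel (fun a b : Fin n => a.val + 1 = b.val)

/-- The set of edges of `G` with exactly one endpoint in `U`. -/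
noncomputable def crossEdges {V : Type*} [Fintype V] [DecidableEq V] (G : SimpleGraph V)
    (U : Finset V) : Finset (Sym2 V) :=
  G.edgeFinset.filter fun e =>
    Sym2.lift ⟨fun x y => (x ∈ U ∧ y ∉ U) ∨ (x ∉ U ∧ y ∈ U),
      fun x y => by simp only [eq_iff_iff]; tauto⟩ e

/-- The Dirichlet Cheeger constant: infimum of `|E(U,Uᶜ)|/|U|` over nonempty sets `U`
of interior vertices (vertices of degree at least two). -/
noncomputable def dCheeger {V : Type*} [Fintype V] [DecidableEq V] (G : SimpleGraph V) : ℝ :=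
  sInf {r | ∃ U : Finset V, U.Nonempty ∧ (∀ v ∈ U, 2 ≤ G.degree v) ∧
    r = ((crossEdges G U).card : ℝ) / U.card}

lemma edgeTerm_mk {V : Type*} (p : ℝ) (f : V → ℝ) (x y : V) :
    edgeTerm p f s(x,y) = |f x - f y| ^ p := rfl

lemma edgeTerm_nonneg {V : Type*} (p : ℝ) (f : V → ℝ) (e : Sym2 V) :
    0 ≤ edgeTerm p f e := by
  induction e using Sym2.ind with
  | _ x y => exact Real.rpow_nonneg (abs_nonneg _) _

-- superadditivity
lemma rpow_superadd {a b p : ℝ} (ha : 0 ≤ a) (hb : 0 ≤ b) (hp : 1 ≤ p) :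
    a ^ p + b ^ p ≤ (a + b) ^ p := by
  rcases eq_or_lt_of_le (by linarith : (0:ℝ) ≤ a + b) with h | h
  · have ha0 : a = 0 := by linarith
    have hb0 : b = 0 := by linarith
    simp [ha0, hb0, Real.zero_rpow (by linarith : p ≠ 0)]
  · have h1 : a ^ p ≤ a * (a + b) ^ (p - 1) := by
      calc a ^ p = a ^ (1 + (p-1)) := by ring_nf
        _ = a ^ (1:ℝ) * a ^ (p-1) := Real.rpow_add' ha (by linarith)
        _ ≤ a * (a+b) ^ (p-1) := by
            rw [Real.rpow_one]
            exact mul_le_mul_of_nonneg_left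
              (Real.rpow_le_rpow ha (by linarith) (by linarith)) ha
    have h2 : b ^ p ≤ b * (a + b) ^ (p - 1) := by
      calc b ^ p = b ^ (1 + (p-1)) := by ring_nf
        _ = b ^ (1:ℝ) * b ^ (p-1) := Real.rpow_add' hb (by linarith)
        _ ≤ b * (a+b) ^ (p-1) := by
            rw [Real.rpow_one]
            exact mul_le_mul_of_nonneg_left
              (Real.rpow_le_rpow hb (by linarith) (by linarith)) hb
    calc a ^ p + b ^ p ≤ (a + b) * (a+b) ^ (p-1) := by linarith [h1, h2, add_mul a b ((a+b)^(p-1))]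
      _ = (a+b) ^ (1 + (p-1)) := by rw [Real.rpow_add' (le_of_lt h) (by linarith), Real.rpow_one]
      _ = (a+b) ^ p := by ring_nf

lemma sum_rpow_le_rpow_sum {ι : Type*} (s : Finset ι) (x : ι → ℝ) (p : ℝ)
    (hx : ∀ i ∈ s, 0 ≤ x i) (hp : 1 ≤ p) :
    ∑ i ∈ s, (x i) ^ p ≤ (∑ i ∈ s, x i) ^ p := by
  induction s using Finset.induction with
  | empty => simp [Real.zero_rpow (by linarith : p ≠ 0)]
  | insert a s' hni ih =>
    rw [Finset.sum_insert hni, Finset.sum_insert hni]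
    have h1 := ih (fun i hi => hx i (Finset.mem_insert_of_mem hi))
    have h2 : (0:ℝ) ≤ ∑ i ∈ s', x i := Finset.sum_nonneg (fun i hi => hx i (Finset.mem_insert_of_mem hi))
    calc (x a) ^ p + ∑ i ∈ s', (x i) ^ p ≤ (x a) ^ p + (∑ i ∈ s', x i) ^ p := by linarith
      _ ≤ (x a + ∑ i ∈ s', x i) ^ p := rpow_superadd (hx a (Finset.mem_insert_self a s')) h2 hp



lemma telescope_Ico (b : ℕ → ℝ) {i j : ℕ} (h : i ≤ j) :
    ∑ k ∈ Finset.Ico i j, (b (k+1) - b k) = b j - b i := by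
  induction j, h using Nat.le_induction with
  | base => simp
  | succ j hij ih =>
    rw [Finset.sum_Ico_succ_top hij, ih]; ring

lemma assignment_bound {V : Type*} [Fintype V] [DecidableEq V] (G : SimpleGraph V)
    (F : V → ℝ) {p : ℝ} (hp : 1 ≤ p) (b : ℕ → ℝ) (hb : Monotone b)
    (N : ℕ) (σ' : ℕ → V)
    (hσF : ∀ k, k ≤ N → F (σ' k) = b k)
    (hσinj : ∀ i, i ≤ N → ∀ j, j ≤ N → σ' i = σ' j → i = j)
    (D : Finset ℕ) (I J : ℕ → ℕ) (C : ℕ → Finset ℕ)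
    (hadj : ∀ d ∈ D, G.Adj (σ' (I d)) (σ' (J d)))
    (hIJ : ∀ d ∈ D, I d < J d ∧ J d ≤ N)
    (hC : ∀ d ∈ D, C d ⊆ Finset.Ico (I d) (J d))
    (hdisj : ∀ d ∈ D, ∀ d' ∈ D, d ≠ d' → I d = I d' → J d = J d' → Disjoint (C d) (C d')) :
    ∑ d ∈ D, (∑ k ∈ C d, (b (k+1) - b k)) ^ p ≤ ∑ e ∈ G.edgeFinset, edgeTerm p F e := by
  classical
  set gap : ℕ → ℝ := fun k => b (k+1) - b k with hgap
  have hgap0 : ∀ k, 0 ≤ gap k := fun k => sub_nonneg.2 (hb (Nat.le_succ k))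
  set A : ℕ → Sym2 V := fun d => s(σ' (I d), σ' (J d)) with hA
  have hmaps : ∀ d ∈ D, A d ∈ G.edgeFinset := fun d hd =>
    SimpleGraph.mem_edgeFinset.2 ((SimpleGraph.mem_edgeSet G).2 (hadj d hd))
  rw [← Finset.sum_fiberwise_of_maps_to hmaps (fun d => (∑ k ∈ C d, gap k) ^ p)]
  apply Finset.sum_le_sum
  intro e he
  by_cases hne : (D.filter (fun d => A d = e)).Nonempty
  · obtain ⟨d₀, hd₀⟩ := hne
    have hd₀D : d₀ ∈ D := (Finset.mem_filter.1 hd₀).1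
    have hAd₀ : A d₀ = e := (Finset.mem_filter.1 hd₀).2
    have key : ∀ d ∈ D.filter (fun d => A d = e), I d = I d₀ ∧ J d = J d₀ := by
      intro d hd
      have hdD : d ∈ D := (Finset.mem_filter.1 hd).1
      have hAe : A d = A d₀ := (Finset.mem_filter.1 hd).2.trans hAd₀.symm
      obtain ⟨hIJd, hJdN⟩ := hIJ d hdD
      obtain ⟨hIJd₀, hJd₀N⟩ := hIJ d₀ hd₀D
      rcases Sym2.eq_iff.1 hAe with ⟨h1, h2⟩ | ⟨h1, h2⟩
      · exact ⟨hσinj _ (le_of_lt (lt_of_lt_of_le hIJd hJdN)) _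
          (le_of_lt (lt_of_lt_of_le hIJd₀ hJd₀N)) h1,
          hσinj _ hJdN _ hJd₀N h2⟩
      · have e1 : I d = J d₀ := hσinj _ (le_of_lt (lt_of_lt_of_le hIJd hJdN)) _ hJd₀N h1
        have e2 : J d = I d₀ := hσinj _ hJdN _ (le_of_lt (lt_of_lt_of_le hIJd₀ hJd₀N)) h2
        omega
    have hsub : (D.filter (fun d => A d = e)).biUnion C ⊆
        Finset.Ico (I d₀) (J d₀) := by
      intro k hk
      obtain ⟨d, hd, hkC⟩ := Finset.mem_biUnion.1 hk
      have := hC d (Finset.mem_filter.1 hd).1 hkC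
      rcases key d hd with ⟨h1, h2⟩
      rwa [h1, h2] at this
    have hpair : (↑(D.filter (fun d => A d = e)) : Set ℕ).PairwiseDisjoint C := by
      intro d hd d' hd' hne'
      rcases key d (by exact_mod_cast hd) with ⟨h1, h2⟩
      rcases key d' (by exact_mod_cast hd') with ⟨h1', h2'⟩
      exact hdisj d (Finset.mem_filter.1 (by exact_mod_cast hd)).1 d'
        (Finset.mem_filter.1 (by exact_mod_cast hd')).1 hne' (h1.trans h1'.symm)
        (h2.trans h2'.symm)
    obtain ⟨hIJd₀, hJd₀N⟩ := hIJ d₀ hd₀D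
    calc ∑ d ∈ D.filter (fun d => A d = e), (∑ k ∈ C d, gap k) ^ p
        ≤ (∑ d ∈ D.filter (fun d => A d = e), ∑ k ∈ C d, gap k) ^ p :=
          sum_rpow_le_rpow_sum _ _ p
            (fun d _ => Finset.sum_nonneg fun k _ => hgap0 k) hp
      _ = (∑ k ∈ (D.filter (fun d => A d = e)).biUnion C, gap k) ^ p := by
          rw [Finset.sum_biUnion hpair]
      _ ≤ (∑ k ∈ Finset.Ico (I d₀) (J d₀), gap k) ^ p := by
          apply Real.rpow_le_rpow
            (Finset.sum_nonneg fun k _ => hgap0 k)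
            (Finset.sum_le_sum_of_subset_of_nonneg hsub fun k _ _ => hgap0 k)
            (by linarith)
      _ = (b (J d₀) - b (I d₀)) ^ p := by rw [telescope_Ico b (le_of_lt hIJd₀)]
      _ = edgeTerm p F e := by
          rw [← hAd₀, hA]
          rw [edgeTerm_mk, hσF _ (le_of_lt (lt_of_lt_of_le hIJd₀ hJd₀N)),
            hσF _ hJd₀N, abs_sub_comm, abs_of_nonneg (sub_nonneg.2 (hb (le_of_lt hIJd₀)))]
  · rw [Finset.not_nonempty_iff_eq_empty.1 hne]
    simpa using edgeTerm_nonneg p F e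

-- two distinct neighbors
lemma two_neighbors {V : Type*} [Fintype V] [DecidableEq V] (G : SimpleGraph V) (v : V)
    (h : 2 ≤ G.degree v) : ∃ w w', w ≠ w' ∧ G.Adj v w ∧ G.Adj v w' := by
  have : 1 < (G.neighborFinset v).card := by rwa [SimpleGraph.card_neighborFinset_eq_degree]
  obtain ⟨w, hw, w', hw', hne⟩ := Finset.one_lt_card.1 this
  exact ⟨w, w', hne, (SimpleGraph.mem_neighborFinset _ _ _).1 hw,
    (SimpleGraph.mem_neighborFinset _ _ _).1 hw'⟩

lemma key_energy {V : Type*} [Fintype V] [DecidableEq V] (G : SimpleGraph V)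
    (hconn : G.Connected) {n : ℕ} (hn : 4 ≤ n) (hcard : Fintype.card V = n)
    (F : V → ℝ) (hF0 : ∀ v, 0 ≤ F v)
    (hdeg : ∀ v, 0 < F v → 2 ≤ G.degree v) {p : ℝ} (hp : 1 ≤ p)
    (σ : Fin n ≃ V) (hmono : Monotone (F ∘ σ))
    (b : ℕ → ℝ) (hbdef : ∀ k, b k = F (σ ⟨min k (n-1), by omega⟩)) :
    (b (n-1) - b (n-3)) ^ p + ∑ k ∈ Finset.range (n-1), (b (k+1) - b k) ^ p
      ≤ ∑ e ∈ G.edgeFinset, edgeTerm p F e := by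
  classical
  have hp0 : p ≠ 0 := by linarith
  set σ' : ℕ → V := fun k => σ ⟨min k (n-1), by omega⟩ with hσ'def
  have hσF : ∀ k, F (σ' k) = b k := fun k => (hbdef k).symm
  have hb : Monotone b := by
    intro k l hkl
    rw [hbdef k, hbdef l]
    exact hmono (by simp [Fin.mk_le_mk]; omega)
  have hbnn : ∀ k, 0 ≤ b k := fun k => by rw [hbdef]; exact hF0 _
  -- rank function
  set rk : V → ℕ := fun v => (σ.symm v).val with hrkdef
  have hrk_le : ∀ v, rk v ≤ n-1 := fun v => by
    have := (σ.symm v).isLt; simp only [hrkdef]; omega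
  have hσ'rk : ∀ v, σ' (rk v) = v := by
    intro v
    have h1 : min (rk v) (n-1) = rk v := min_eq_left (hrk_le v)
    simp only [hσ'def, h1]
    have : (⟨rk v, by have := (σ.symm v).isLt; simp only [hrkdef]; omega⟩ : Fin n) = σ.symm v := by
      apply Fin.ext; simp [hrkdef]
    rw [this, Equiv.apply_symm_apply]
  have hrkσ' : ∀ m, m ≤ n-1 → rk (σ' m) = m := by
    intro m hm
    simp only [hσ'def, hrkdef, Equiv.symm_apply_apply]
    simp; omega
  have hσinj : ∀ i, i ≤ n-1 → ∀ j, j ≤ n-1 → σ' i = σ' j → i = j := by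
    intro i hi j hj hij
    have := congrArg rk hij
    rwa [hrkσ' i hi, hrkσ' j hj] at this
  -- degenerate case
  by_cases hbpos : b (n-1) ≤ 0
  · have hzero : ∀ k, k ≤ n-1 → b k = 0 := fun k hk =>
      le_antisymm ((hb hk).trans hbpos) (hbnn k)
    have h1 : (b (n-1) - b (n-3)) ^ p = 0 := by
      rw [hzero (n-1) le_rfl, hzero (n-3) (by omega)]
      simp [Real.zero_rpow hp0]
    have h2 : ∀ k ∈ Finset.range (n-1), (b (k+1) - b k) ^ p = 0 := by
      intro k hk
      rw [hzero (k+1) (by simp at hk; omega), hzero k (by simp at hk; omega)]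
      simp [Real.zero_rpow hp0]
    rw [h1, Finset.sum_congr rfl h2]
    simp
    exact Finset.sum_nonneg fun e _ => edgeTerm_nonneg p F e
  push_neg at hbpos
  -- crossing edges from connectivity
  have hcross : ∀ k, k < n-1 → ∃ i j, i ≤ k ∧ k < j ∧ j ≤ n-1 ∧ G.Adj (σ' i) (σ' j) := by
    intro k hk
    set S : Set V := {v | rk v ≤ k} with hSdef
    have hu : σ' 0 ∈ S := by simp only [hSdef, Set.mem_setOf_eq, hrkσ' 0 (by omega)]; omega
    have hw : σ' (n-1) ∉ S := by
      simp only [hSdef, Set.mem_setOf_eq, hrkσ' (n-1) le_rfl]; omega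
    obtain ⟨pw⟩ := hconn.preconnected (σ' 0) (σ' (n-1))
    obtain ⟨d, _, hdS, hdnS⟩ := pw.exists_boundary_dart S hu hw
    refine ⟨rk d.fst, rk d.snd, hdS, ?_, hrk_le _, ?_⟩
    · simp only [hSdef, Set.mem_setOf_eq] at hdnS; omega
    · rw [hσ'rk d.fst, hσ'rk d.snd]; exact d.adj
  -- the top vertex and its two neighbors
  set v₁ : V := σ' (n-1) with hv₁
  have hFv₁ : 0 < F v₁ := by rw [hσF]; exact hbpos
  obtain ⟨w, w', hww', haw, haw'⟩ := two_neighbors G v₁ (hdeg v₁ hFv₁)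
  have hrkw : rk w ≤ n-2 := by
    have h1 : rk w ≠ n-1 := fun h => haw.ne' (by rw [← hσ'rk w, h])
    have := hrk_le w; omega
  have hrkw' : rk w' ≤ n-2 := by
    have h1 : rk w' ≠ n-1 := fun h => haw'.ne' (by rw [← hσ'rk w', h])
    have := hrk_le w'; omega
  have hrkne : rk w ≠ rk w' := fun h => hww' (by rw [← hσ'rk w, h, hσ'rk w'])
  -- order them
  obtain ⟨u1, u2, hu12, hi2, ha1, ha2⟩ :
      ∃ u1 u2, rk u1 < rk u2 ∧ rk u2 ≤ n-2 ∧ G.Adj v₁ u1 ∧ G.Adj v₁ u2 := by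
    rcases lt_or_gt_of_ne hrkne with h | h
    · exact ⟨w, w', h, hrkw', haw, haw'⟩
    · exact ⟨w', w, h, hrkw, haw', haw⟩
  have hi1 : rk u1 ≤ n-3 := by omega
  -- data for level n-3
  obtain ⟨I₃, J₃, C₃, hIJ₃, hJ₃N, hadj₃, hC₃, hJ₃ne, hC₃sub, hsum₃⟩ :
      ∃ I₃ : ℕ, ∃ J₃ : ℕ, ∃ C₃ : Finset ℕ, I₃ < J₃ ∧ J₃ ≤ n-1 ∧ G.Adj (σ' I₃) (σ' J₃) ∧
        C₃ ⊆ Finset.Ico I₃ J₃ ∧ (J₃ = n-1 → C₃ = ∅) ∧ C₃ ⊆ {n-3} ∧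
        (∑ k ∈ C₃, (b (k+1) - b k)) = b (n-2) - b (n-3) := by
    by_cases htie : b (n-2) = b (n-3)
    · refine ⟨rk u1, n-1, ∅, by omega, le_rfl, ?_, by simp, fun _ => rfl, by simp, by
        simp [htie]⟩
      rw [hσ'rk u1]
      exact ha1.symm
    · have hlt : b (n-3) < b (n-2) := lt_of_le_of_ne (hb (by omega)) (Ne.symm htie)
      have hb2pos : 0 < b (n-2) := lt_of_le_of_lt (hbnn (n-3)) hlt
      have hFv₂ : 0 < F (σ' (n-2)) := by rw [hσF]; exact hb2pos
      obtain ⟨x, x', hxx', hax, hax'⟩ := two_neighbors G (σ' (n-2)) (hdeg _ hFv₂)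
      obtain ⟨u₀, hau₀, hu₀v₁⟩ : ∃ u₀, G.Adj (σ' (n-2)) u₀ ∧ u₀ ≠ v₁ := by
        by_cases hx : x = v₁
        · exact ⟨x', hax', fun h => hxx' (by rw [hx, h])⟩
        · exact ⟨x, hax, hx⟩
      have hrku₀ : rk u₀ ≤ n-3 := by
        have h1 : rk u₀ ≠ n-1 := fun h => hu₀v₁ (by rw [← hσ'rk u₀, h])
        have h2 : rk u₀ ≠ n-2 := fun h => hau₀.ne' (by rw [← hσ'rk u₀, h])
        have := hrk_le u₀; omega
      refine ⟨rk u₀, n-2, {n-3}, by omega, by omega, ?_, ?_, by omega, le_rfl, ?_⟩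
      · rw [hσ'rk u₀]; exact hau₀.symm
      · intro k hk
        simp only [Finset.mem_singleton] at hk
        simp only [Finset.mem_Ico]
        omega
      · rw [Finset.sum_singleton, show n-3+1 = n-2 by omega]
  -- base assignments
  have hbase : ∀ d, d < n-1 → ∃ ij : ℕ × ℕ, ij.1 ≤ d ∧ d < ij.2 ∧ ij.2 ≤ n-1 ∧
      G.Adj (σ' ij.1) (σ' ij.2) := by
    intro d hd; obtain ⟨i, j, h1, h2, h3, h4⟩ := hcross d hd; exact ⟨(i, j), h1, h2, h3, h4⟩
  set bIJ : ℕ → ℕ × ℕ := fun d => if h : d < n-1 then (hbase d h).choose else (0, 1) with hbIJdef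
  have hbIJ : ∀ d, d < n-1 → (bIJ d).1 ≤ d ∧ d < (bIJ d).2 ∧ (bIJ d).2 ≤ n-1 ∧
      G.Adj (σ' (bIJ d).1) (σ' (bIJ d).2) := by
    intro d hd
    simp only [hbIJdef, dif_pos hd]
    exact (hbase d hd).choose_spec
  set I : ℕ → ℕ := fun d => if d = n-1 then rk u1 else if d = n-2 then rk u2
    else if d = n-3 then I₃ else (bIJ d).1 with hIdef
  set J : ℕ → ℕ := fun d => if d = n-1 then n-1 else if d = n-2 then n-1
    else if d = n-3 then J₃ else (bIJ d).2 with hJdef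
  set C : ℕ → Finset ℕ := fun d => if d = n-1 then {n-3, n-2}
    else if d = n-3 then C₃ else {d} with hCdef
  have hne123 : n-1 ≠ n-2 ∧ n-2 ≠ n-3 ∧ n-1 ≠ n-3 := by omega
  have H := assignment_bound G F hp b hb (n-1) σ' (fun k _ => hσF k) hσinj
    (Finset.range n) I J C ?_ ?_ ?_ ?_
  · -- transform the conclusion
    rw [show n = (n-1)+1 by omega, Finset.sum_range_succ] at H
    have hlast : (∑ k ∈ C ((n-1)), (b (k+1) - b k)) ^ p = (b (n-1) - b (n-3)) ^ p := by
      have hCl : C (n-1) = {n-3, n-2} := if_pos rfl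
      rw [hCl, Finset.sum_insert (by simp; omega), Finset.sum_singleton,
        show n-3+1 = n-2 by omega, show n-2+1 = n-1 by omega]
      ring_nf
    have hrest : ∀ d ∈ Finset.range (n-1),
        (∑ k ∈ C d, (b (k+1) - b k)) ^ p = (b (d+1) - b d) ^ p := by
      intro d hd
      simp only [Finset.mem_range] at hd
      by_cases hd3 : d = n-3
      · have hCd : C d = C₃ := by simp only [hCdef]; rw [if_neg (by omega), if_pos hd3]
        rw [hCd, hsum₃, hd3, show n-3+1 = n-2 by omega]
      · have hCd : C d = {d} := by simp only [hCdef]; rw [if_neg (by omega), if_neg hd3]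
        rw [hCd, Finset.sum_singleton]
    rw [Finset.sum_congr rfl hrest, hlast] at H
    linarith [H]
  · -- hadj
    intro d hd
    simp only [Finset.mem_range] at hd
    by_cases h1 : d = n-1
    · simp only [hIdef, hJdef, if_pos h1]
      rw [hσ'rk u1]; exact ha1.symm
    by_cases h2 : d = n-2
    · simp only [hIdef, hJdef, if_neg h1, if_pos h2]
      rw [hσ'rk u2]; exact ha2.symm
    by_cases h3 : d = n-3
    · simp only [hIdef, hJdef, if_neg h1, if_neg h2, if_pos h3]
      exact hadj₃
    · simp only [hIdef, hJdef, if_neg h1, if_neg h2, if_neg h3]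
      exact (hbIJ d (by omega)).2.2.2
  · -- hIJ
    intro d hd
    simp only [Finset.mem_range] at hd
    by_cases h1 : d = n-1
    · simp only [hIdef, hJdef, if_pos h1]
      omega
    by_cases h2 : d = n-2
    · simp only [hIdef, hJdef, if_neg h1, if_pos h2]
      omega
    by_cases h3 : d = n-3
    · simp only [hIdef, hJdef, if_neg h1, if_neg h2, if_pos h3]
      exact ⟨hIJ₃, hJ₃N⟩
    · simp only [hIdef, hJdef, if_neg h1, if_neg h2, if_neg h3]
      obtain ⟨a1, a2, a3, _⟩ := hbIJ d (by omega)
      omega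
  · -- hC
    intro d hd
    simp only [Finset.mem_range] at hd
    by_cases h1 : d = n-1
    · simp only [hIdef, hJdef, hCdef, if_pos h1]
      intro k hk
      simp only [Finset.mem_insert, Finset.mem_singleton] at hk
      simp only [Finset.mem_Ico]
      omega
    by_cases h2 : d = n-2
    · simp only [hIdef, hJdef, hCdef, if_neg h1, if_pos h2, if_neg (show d ≠ n-3 by omega)]
      intro k hk
      simp only [Finset.mem_singleton] at hk
      simp only [Finset.mem_Ico]
      omega
    by_cases h3 : d = n-3
    · simp only [hIdef, hJdef, hCdef, if_neg h1, if_neg h2, if_pos h3]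
      exact hC₃
    · simp only [hIdef, hJdef, hCdef, if_neg h1, if_neg h2, if_neg h3]
      intro k hk
      simp only [Finset.mem_singleton] at hk
      obtain ⟨a1, a2, a3, _⟩ := hbIJ d (by omega)
      simp only [Finset.mem_Ico]
      omega
  · -- hdisj
    intro d hd d' hd' hne hIeq hJeq
    simp only [Finset.mem_range] at hd hd'
    -- helper: C d is contained in a small set
    have hCsub : ∀ e, e < n → C e ⊆ (if e = n-1 then ({n-3, n-2} : Finset ℕ) else {e}) := by
      intro e he
      by_cases h1 : e = n-1
      · simp only [hCdef, if_pos h1]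
        exact subset_rfl
      by_cases h3 : e = n-3
      · simp only [hCdef, if_neg h1, if_pos h3]
        rw [h3]
        exact hC₃sub
      · simp only [hCdef, if_neg h1, if_neg h3]
        exact subset_rfl
    by_cases h1 : d = n-1
    · -- d is the star
      by_cases h2' : d' = n-2
      · -- I: rk u1 vs rk u2, equal -> contradiction
        exfalso
        simp only [hIdef, if_pos h1, if_neg (show d' ≠ n-1 by omega), if_pos h2'] at hIeq
        omega
      by_cases h3' : d' = n-3
      · -- use J
        simp only [hJdef, if_pos h1, if_neg (show d' ≠ n-1 by omega),
          if_neg (show d' ≠ n-2 by omega), if_pos h3'] at hJeq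
        have hC3e : C₃ = ∅ := hJ₃ne hJeq.symm
        have : C d' = C₃ := by
          simp only [hCdef]; rw [if_neg (by omega), if_pos h3']
        rw [this, hC3e]
        exact Finset.disjoint_empty_right _
      · -- d' ≤ n-4 (d' ≠ n-1 since d ≠ d')
        have hd'ne1 : d' ≠ n-1 := by rw [h1] at hne; exact fun h => hne h.symm
        have h4 : d' ≤ n-4 := by omega
        apply Finset.disjoint_of_subset_left (hCsub d hd)
        apply Finset.disjoint_of_subset_right (hCsub d' hd')
        rw [if_pos h1, if_neg hd'ne1]
        simp only [Finset.disjoint_insert_left, Finset.disjoint_singleton,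
          Finset.mem_singleton]
        constructor <;> omega
    · by_cases h1' : d' = n-1
      · -- symmetric: swap roles
        by_cases h2 : d = n-2
        · exfalso
          simp only [hIdef, if_pos h1', if_neg h1, if_pos h2] at hIeq
          omega
        by_cases h3 : d = n-3
        · simp only [hJdef, if_pos h1', if_neg h1, if_neg h2, if_pos h3] at hJeq
          have hC3e : C₃ = ∅ := hJ₃ne hJeq
          have : C d = C₃ := by
            simp only [hCdef]; rw [if_neg h1, if_pos h3]
          rw [this, hC3e]
          exact Finset.disjoint_empty_left _
        · have h4 : d ≤ n-4 := by omega
          apply Finset.disjoint_of_subset_left (hCsub d hd)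
          apply Finset.disjoint_of_subset_right (hCsub d' hd')
          rw [if_neg h1, if_pos h1']
          simp only [Finset.disjoint_insert_right, Finset.disjoint_singleton,
            Finset.mem_singleton]
          constructor <;> omega
      · -- neither is the star: C d ⊆ {d}, C d' ⊆ {d'}, d ≠ d'
        apply Finset.disjoint_of_subset_left (hCsub d hd)
        apply Finset.disjoint_of_subset_right (hCsub d' hd')
        rw [if_neg h1, if_neg h1']
        simp only [Finset.disjoint_singleton]
        exact hne

lemma tadpole_adj {n : ℕ} (a b : Fin n) :
    (tadpole n 3).Adj a b ↔ a ≠ b ∧ ((a.val+1 = b.val ∨ (a.val = 0 ∧ b.val = 2)) ∨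
      (b.val+1 = a.val ∨ (b.val = 0 ∧ a.val = 2))) := by
  simp [tadpole, SimpleGraph.fromRel_adj]

lemma tadpole_deg {n : ℕ} (hn : 4 ≤ n) (v : Fin n) (hv : v.val + 1 < n) :
    2 ≤ (tadpole n 3).degree v := by
  rw [← SimpleGraph.card_neighborFinset_eq_degree]
  apply Finset.one_lt_card.2
  by_cases h0 : v.val = 0
  · refine ⟨⟨1, by omega⟩, ?_, ⟨2, by omega⟩, ?_, ?_⟩
    · rw [SimpleGraph.mem_neighborFinset, tadpole_adj]
      refine ⟨fun h => ?_, Or.inl (Or.inl ?_)⟩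
      · have := congrArg Fin.val h; simp only [Fin.val_mk] at this; omega
      · simp only [Fin.val_mk]; omega
    · rw [SimpleGraph.mem_neighborFinset, tadpole_adj]
      refine ⟨fun h => ?_, Or.inl (Or.inr ?_)⟩
      · have := congrArg Fin.val h; simp only [Fin.val_mk] at this; omega
      · exact ⟨h0, rfl⟩
    · intro h; have := congrArg Fin.val h; simp only [Fin.val_mk] at this; omega
  · refine ⟨⟨v.val - 1, by omega⟩, ?_, ⟨v.val + 1, by omega⟩, ?_, ?_⟩
    · rw [SimpleGraph.mem_neighborFinset, tadpole_adj]
      refine ⟨fun h => ?_, Or.inr (Or.inl ?_)⟩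
      · have := congrArg Fin.val h; simp only [Fin.val_mk] at this; omega
      · simp only [Fin.val_mk]; omega
    · rw [SimpleGraph.mem_neighborFinset, tadpole_adj]
      refine ⟨fun h => ?_, Or.inl (Or.inl ?_)⟩
      · have := congrArg Fin.val h; simp only [Fin.val_mk] at this; omega
      · simp only [Fin.val_mk]
    · intro h; have := congrArg Fin.val h; simp only [Fin.val_mk] at this; omega

lemma tadpole_deg_one {n : ℕ} (hn : 4 ≤ n) (v : Fin n) (h : (tadpole n 3).degree v = 1) :
    v.val = n - 1 := by
  by_contra h'
  have := tadpole_deg hn v (by have := v.isLt; omega)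
  omega

lemma tadpole_energy_le {n : ℕ} (hn : 4 ≤ n) (p : ℝ) (g : Fin n → ℝ) :
    ∑ e ∈ (tadpole n 3).edgeFinset, edgeTerm p g e ≤
      edgeTerm p g s((⟨0, by omega⟩ : Fin n), (⟨2, by omega⟩ : Fin n)) +
      ∑ k ∈ Finset.range (n-1),
        edgeTerm p g s((⟨min k (n-1), by omega⟩ : Fin n), (⟨min (k+1) (n-1), by omega⟩ : Fin n)) := by
  classical
  set vert : ℕ → Fin n := fun k => (⟨min k (n-1), by omega⟩ : Fin n) with hvert
  have hvert_val : ∀ k, k ≤ n-1 → (vert k).val = k := fun k hk => by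
    simp [hvert]; omega
  set T : Finset (Sym2 (Fin n)) :=
    insert s((⟨0, by omega⟩ : Fin n), (⟨2, by omega⟩ : Fin n))
      ((Finset.range (n-1)).image (fun k => s(vert k, vert (k+1)))) with hT
  have hsub : (tadpole n 3).edgeFinset ⊆ T := by
    intro e he
    induction e using Sym2.ind with
    | _ a c =>
      rw [SimpleGraph.mem_edgeFinset, SimpleGraph.mem_edgeSet, tadpole_adj] at he
      obtain ⟨hne, hcase⟩ := he
      have hmem_cons : ∀ (x y : Fin n), x.val + 1 = y.val → s(x, y) ∈ T := by
        intro x y hxy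
        apply Finset.mem_insert_of_mem
        apply Finset.mem_image.2
        have hxlt : x.val ≤ n - 2 := by have := y.isLt; omega
        refine ⟨x.val, Finset.mem_range.2 (by omega), ?_⟩
        have h1 : vert x.val = x := Fin.ext (hvert_val _ (by omega))
        have h2 : vert (x.val + 1) = y := Fin.ext (by rw [hvert_val _ (by omega)]; omega)
        rw [h1, h2]
      have hmem02 : ∀ (x y : Fin n), x.val = 0 → y.val = 2 → s(x, y) ∈ T := by
        intro x y hx hy
        have hx' : x = (⟨0, by omega⟩ : Fin n) := Fin.ext hx
        have hy' : y = (⟨2, by omega⟩ : Fin n) := Fin.ext hy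
        rw [hx', hy']
        exact Finset.mem_insert_self _ _
      rcases hcase with (h | ⟨h1, h2⟩) | (h | ⟨h1, h2⟩)
      · exact hmem_cons a c h
      · exact hmem02 a c h1 h2
      · rw [Sym2.eq_swap]; exact hmem_cons c a h
      · rw [Sym2.eq_swap]; exact hmem02 c a h1 h2
  calc ∑ e ∈ (tadpole n 3).edgeFinset, edgeTerm p g e
      ≤ ∑ e ∈ T, edgeTerm p g e :=
        Finset.sum_le_sum_of_subset_of_nonneg hsub (fun e _ _ => edgeTerm_nonneg p g e)
    _ ≤ edgeTerm p g s((⟨0, by omega⟩ : Fin n), (⟨2, by omega⟩ : Fin n)) +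
        ∑ k ∈ Finset.range (n-1), edgeTerm p g s(vert k, vert (k+1)) := by
        rw [hT]
        have hinj : Set.InjOn (fun k => s(vert k, vert (k+1))) (Finset.range (n-1)) := by
          intro k hk l hl hkl
          simp only [Finset.coe_range, Set.mem_Iio] at hk hl
          simp only at hkl
          rcases Sym2.eq_iff.1 hkl with ⟨e1, e2⟩ | ⟨e1, e2⟩
          · have := congrArg Fin.val e1
            rw [hvert_val _ (by omega), hvert_val _ (by omega)] at this
            exact this
          · have t1 := congrArg Fin.val e1
            have t2 := congrArg Fin.val e2
            rw [hvert_val _ (by omega), hvert_val _ (by omega)] at t1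
            rw [hvert_val _ (by omega), hvert_val _ (by omega)] at t2
            omega
        have hnotmem : s((⟨0, by omega⟩ : Fin n), (⟨2, by omega⟩ : Fin n)) ∉
            ((Finset.range (n-1)).image (fun k => s(vert k, vert (k+1)))) := by
          intro hmem
          obtain ⟨k, hk, hkeq⟩ := Finset.mem_image.1 hmem
          simp only [Finset.mem_range] at hk
          rcases Sym2.eq_iff.1 hkeq with ⟨e1, e2⟩ | ⟨e1, e2⟩
          · have t1 := congrArg Fin.val e1
            have t2 := congrArg Fin.val e2
            rw [hvert_val _ (by omega)] at t1
            rw [hvert_val _ (by omega)] at t2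
            simp only [Fin.val_mk] at t1 t2
            omega
          · have t1 := congrArg Fin.val e1
            have t2 := congrArg Fin.val e2
            rw [hvert_val _ (by omega)] at t1
            rw [hvert_val _ (by omega)] at t2
            simp only [Fin.val_mk] at t1 t2
            omega
        rw [Finset.sum_insert hnotmem, Finset.sum_image hinj]



lemma degree_pos_of_connected {V : Type*} [Fintype V] [DecidableEq V] (G : SimpleGraph V)
    (hconn : G.Connected) (h2 : 2 ≤ Fintype.card V) (v : V) : 0 < G.degree v := by
  rw [← SimpleGraph.card_neighborFinset_eq_degree, Finset.card_pos]
  obtain ⟨w, hw⟩ := Fintype.exists_ne_of_one_lt_card (by omega) v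
  obtain ⟨pw⟩ := hconn.preconnected w v
  obtain ⟨d, _, hdS, hdnS⟩ := pw.exists_boundary_dart {u | u ≠ v} hw (by simp)
  have hsnd : d.snd = v := not_not.1 hdnS
  exact ⟨d.fst, (SimpleGraph.mem_neighborFinset _ _ _).2 (hsnd ▸ d.adj).symm⟩

lemma exists_interior {V : Type*} [Fintype V] [DecidableEq V] (G : SimpleGraph V)
    (hconn : G.Connected) (h4 : 3 ≤ Fintype.card V) {v₀ : V} (hv₀ : G.degree v₀ = 1) :
    ∃ w, G.Adj v₀ w ∧ G.degree w ≠ 1 := by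
  have h1 : (G.neighborFinset v₀).card = 1 := by
    rwa [SimpleGraph.card_neighborFinset_eq_degree]
  obtain ⟨w, hw⟩ := Finset.card_eq_one.1 h1
  have hadj : G.Adj v₀ w := (SimpleGraph.mem_neighborFinset _ _ _).1
    (hw ▸ Finset.mem_singleton_self w)
  refine ⟨w, hadj, fun hdw => ?_⟩
  have h2 : (G.neighborFinset w).card = 1 := by
    rwa [SimpleGraph.card_neighborFinset_eq_degree]
  obtain ⟨z, hz⟩ := Finset.card_eq_one.1 h2
  have hzv : z = v₀ := by
    have : v₀ ∈ G.neighborFinset w := (SimpleGraph.mem_neighborFinset _ _ _).2 hadj.symm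
    rw [hz] at this
    exact (Finset.mem_singleton.1 this).symm
  have hcompl : ({v₀, w}ᶜ : Finset V).Nonempty := by
    rw [← Finset.card_pos, Finset.card_compl]
    have h3 : ({v₀, w} : Finset V).card ≤ 2 := by
      simpa using Finset.card_insert_le v₀ {w}
    omega
  obtain ⟨u, hu⟩ := hcompl
  simp only [Finset.mem_compl, Finset.mem_insert, Finset.mem_singleton, not_or] at hu
  obtain ⟨huv₀, huw⟩ := hu
  obtain ⟨pw⟩ := hconn.preconnected u w
  obtain ⟨d, _, hdS, hdnS⟩ := pw.exists_boundary_dart {x | x ≠ v₀ ∧ x ≠ w}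
    ⟨huv₀, huw⟩ (by simp)
  simp only [Set.mem_setOf_eq, not_and_or, not_not] at hdnS
  obtain ⟨hd1, hd2⟩ := hdS
  rcases hdnS with h | h
  · have : d.fst ∈ G.neighborFinset v₀ :=
      (SimpleGraph.mem_neighborFinset _ _ _).2 (h ▸ d.adj).symm
    rw [hw] at this
    exact hd2 (Finset.mem_singleton.1 this)
  · have : d.fst ∈ G.neighborFinset w :=
      (SimpleGraph.mem_neighborFinset _ _ _).2 (h ▸ d.adj).symm
    rw [hz] at this
    exact hd1 ((Finset.mem_singleton.1 this).trans hzv)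


lemma rayleigh_nonneg {V : Type*} [Fintype V] [DecidableEq V] (G : SimpleGraph V)
    (p : ℝ) (f : V → ℝ) : 0 ≤ rayleigh G p f :=
  div_nonneg (Finset.sum_nonneg fun e _ => edgeTerm_nonneg p f e)
    (Finset.sum_nonneg fun _ _ => Real.rpow_nonneg (abs_nonneg _) _)

set_option maxHeartbeats 2000000 in
/-- Faber–Krahn inequality for graphs with a fixed number of vertices. -/
theorem faber_krahn_vertices {V : Type*} [Fintype V] [DecidableEq V] (G : SimpleGraph V)
    (n : ℕ) (hn : 4 ≤ n) (hcard : Fintype.card V = n) (hconn : G.Connected)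
    (hbd : ∃ v, G.degree v = 1) {p : ℝ} (hp : 1 < p) :
    lambda1 G p ≥ lambda1 (tadpole n 3) p := by
  classical
  have hp1 : (1:ℝ) ≤ p := hp.le
  have hp0 : p ≠ 0 := by linarith
  obtain ⟨v₀, hv₀⟩ := hbd
  obtain ⟨w₀, hadj₀, hdw₀⟩ := exists_interior G hconn (by omega) hv₀
  have hSG : {r | ∃ f : V → ℝ, f ≠ 0 ∧ (∀ v, G.degree v = 1 → f v = 0) ∧
      r = rayleigh G p f}.Nonempty := by
    refine ⟨rayleigh G p (fun v => if v = w₀ then 1 else 0),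
      fun v => if v = w₀ then 1 else 0, ?_, ?_, rfl⟩
    · intro h
      have := congrFun h w₀
      simp at this
    · intro v hv
      simp only [ite_eq_right_iff]
      intro hvw
      exact absurd (hvw ▸ hv) hdw₀
  rw [ge_iff_le]
  unfold lambda1
  apply le_csInf hSG
  rintro r ⟨f, hf0, hfb, rfl⟩
  set F : V → ℝ := fun v => |f v| with hF
  have hF0 : ∀ v, 0 ≤ F v := fun v => abs_nonneg _
  have hdegF : ∀ v, 0 < F v → 2 ≤ G.degree v := by
    intro v hv
    have h1 : G.degree v ≠ 1 := by
      intro h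
      rw [hF] at hv
      simp only at hv
      rw [hfb v h] at hv
      simp at hv
    have h2 : 0 < G.degree v := degree_pos_of_connected G hconn (by omega) v
    omega
  have eV : V ≃ Fin n := Fintype.equivFinOfCardEq hcard
  set σ : Fin n ≃ V := (Tuple.sort (F ∘ eV.symm)).trans eV.symm with hσ
  have hmono : Monotone (F ∘ σ) := Tuple.monotone_sort (F ∘ eV.symm)
  set b : ℕ → ℝ := fun k => F (σ ⟨min k (n-1), by omega⟩) with hb
  have hbmono : Monotone b := by
    intro k l hkl
    exact hmono (by simp [Fin.mk_le_mk]; omega)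
  have hbnn : ∀ k, 0 ≤ b k := fun k => hF0 _
  have hFeq : ∀ v : V, F v = (F ∘ σ) (σ.symm v) := by
    intro v; simp
  have hb0 : b 0 = 0 := by
    have h1 : b 0 ≤ F v₀ := by
      rw [hFeq v₀, hb]
      exact hmono (by simp only [Fin.le_def, Fin.val_mk]; omega)
    have h2 : F v₀ = 0 := by rw [hF]; simp [hfb v₀ hv₀]
    have := hbnn 0
    linarith
  have hbtop : ∀ v, F v ≤ b (n-1) := by
    intro v
    rw [hFeq v, hb]
    apply hmono
    simp only [Fin.le_def, Fin.val_mk]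
    have := (σ.symm v).isLt
    omega
  set g : Fin n → ℝ := fun v => b (n - 1 - v.val) with hg
  have hgb : ∀ v, (tadpole n 3).degree v = 1 → g v = 0 := by
    intro v hv
    rw [hg]
    simp only
    rw [tadpole_deg_one hn v hv, Nat.sub_self]
    exact hb0
  have hgne : g ≠ 0 := by
    obtain ⟨v, hv⟩ := Function.ne_iff.1 hf0
    have hFv : 0 < F v := abs_pos.2 hv
    have hbt : 0 < b (n-1) := lt_of_lt_of_le hFv (hbtop v)
    intro h
    have h2 := congrFun h ⟨0, by omega⟩
    rw [hg] at h2
    simp only [Fin.val_mk, Nat.sub_zero, Pi.zero_apply] at h2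
    linarith
  have hden : ∑ v : Fin n, |g v| ^ p = ∑ v : V, |f v| ^ p := by
    calc ∑ v : Fin n, |g v| ^ p = ∑ k ∈ Finset.range n, |b (n-1-k)| ^ p :=
          Fin.sum_univ_eq_sum_range (fun k => |b (n-1-k)| ^ p) n
      _ = ∑ k ∈ Finset.range n, |b k| ^ p := Finset.sum_range_reflect (fun k => |b k| ^ p) n
      _ = ∑ i : Fin n, |F (σ i)| ^ p := by
          rw [← Fin.sum_univ_eq_sum_range (fun k => |b k| ^ p) n]
          apply Finset.sum_congr rfl
          intro i _
          have h1 : (⟨min i.val (n-1), by omega⟩ : Fin n) = i := by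
            apply Fin.ext
            simp only [Fin.val_mk]
            have := i.isLt
            omega
          have hival : b i.val = F (σ i) := by
            calc b i.val = F (σ ⟨min i.val (n-1), by omega⟩) := by rw [hb]
              _ = F (σ i) := by rw [h1]
          rw [hival]
      _ = ∑ v : V, |F v| ^ p := Equiv.sum_comp σ (fun v => |F v| ^ p)
      _ = ∑ v : V, |f v| ^ p := by
          apply Finset.sum_congr rfl
          intro v _
          rw [hF]
          simp only [abs_abs]
  have hdenpos : 0 < ∑ v : V, |f v| ^ p := by
    obtain ⟨v, hv⟩ := Function.ne_iff.1 hf0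
    apply Finset.sum_pos' (fun u _ => Real.rpow_nonneg (abs_nonneg _) _)
    exact ⟨v, Finset.mem_univ v, Real.rpow_pos_of_pos (abs_pos.2 hv) _⟩
  have hnum : ∑ e ∈ (tadpole n 3).edgeFinset, edgeTerm p g e ≤
      ∑ e ∈ G.edgeFinset, edgeTerm p f e := by
    have hEF : ∑ e ∈ G.edgeFinset, edgeTerm p F e ≤ ∑ e ∈ G.edgeFinset, edgeTerm p f e := by
      apply Finset.sum_le_sum
      intro e _
      induction e using Sym2.ind with
      | _ x y =>
        rw [edgeTerm_mk, edgeTerm_mk]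
        apply Real.rpow_le_rpow (abs_nonneg _) _ (by linarith)
        rw [hF]
        exact abs_abs_sub_abs_le_abs_sub (f x) (f y)
    have hkey := key_energy G hconn hn hcard F hF0 hdegF hp1 σ hmono b (fun k => rfl)
    have htp := tadpole_energy_le hn p g
    have h02 : edgeTerm p g s((⟨0, by omega⟩ : Fin n), (⟨2, by omega⟩ : Fin n)) =
        (b (n-1) - b (n-3)) ^ p := by
      rw [edgeTerm_mk, hg]
      simp only [Fin.val_mk]
      rw [show n-1-0 = n-1 by omega, show n-1-2 = n-3 by omega,
        abs_of_nonneg (sub_nonneg.2 (hbmono (by omega : n-3 ≤ n-1)))]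
    have hpath : ∀ k ∈ Finset.range (n-1),
        edgeTerm p g s((⟨min k (n-1), by omega⟩ : Fin n), (⟨min (k+1) (n-1), by omega⟩ : Fin n)) =
        (b (n-1-k) - b (n-2-k)) ^ p := by
      intro k hk
      simp only [Finset.mem_range] at hk
      rw [edgeTerm_mk, hg]
      simp only [Fin.val_mk]
      rw [show min k (n-1) = k by omega, show min (k+1) (n-1) = k+1 by omega,
        show n-1-(k+1) = n-2-k by omega,
        abs_of_nonneg (sub_nonneg.2 (hbmono (by omega : n-2-k ≤ n-1-k)))]
    have hrefl : ∑ k ∈ Finset.range (n-1), (b (n-1-k) - b (n-2-k)) ^ p =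
        ∑ k ∈ Finset.range (n-1), (b (k+1) - b k) ^ p := by
      rw [← Finset.sum_range_reflect (fun k => (b (k+1) - b k) ^ p) (n-1)]
      apply Finset.sum_congr rfl
      intro j hj
      simp only [Finset.mem_range] at hj
      rw [show n-1-1-j = n-2-j by omega, show n-2-j+1 = n-1-j by omega]
    calc ∑ e ∈ (tadpole n 3).edgeFinset, edgeTerm p g e
        ≤ edgeTerm p g s((⟨0, by omega⟩ : Fin n), (⟨2, by omega⟩ : Fin n)) +
          ∑ k ∈ Finset.range (n-1),
            edgeTerm p g s((⟨min k (n-1), by omega⟩ : Fin n),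
              (⟨min (k+1) (n-1), by omega⟩ : Fin n)) := htp
      _ = (b (n-1) - b (n-3)) ^ p + ∑ k ∈ Finset.range (n-1), (b (k+1) - b k) ^ p := by
          rw [h02, Finset.sum_congr rfl hpath, hrefl]
      _ ≤ ∑ e ∈ G.edgeFinset, edgeTerm p F e := hkey
      _ ≤ ∑ e ∈ G.edgeFinset, edgeTerm p f e := hEF
  have hfinal : rayleigh (tadpole n 3) p g ≤ rayleigh G p f := by
    rw [rayleigh, rayleigh, hden]
    exact div_le_div_of_nonneg_right hnum hdenpos.le
  refine le_trans (csInf_le ⟨0, ?_⟩ ?_) hfinal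
  · rintro r ⟨h, _, _, rfl⟩
    exact rayleigh_nonneg _ _ _
  · exact ⟨g, hgne, hgb, rfl⟩
end
end

section
/- Let p > 1 and let G be a finite simple connected graph with exactly n ≥ 4 edges whose boundary B(G) (the set of vertices of degree one) is nonempty. Then λ_{1,p}(G) ≥ λ_{1,p}(T_{n,3}), where T_{n,3} is the tadpole graph on n vertices with head of size 3. -/
open scoped Classical

noncomputable section

open Finset
open Finset

namespace FK

lemma edgeTerm_mk {V : Type*} (p : ℝ) (f : V → ℝ) (a b : V) :
    edgeTerm p f s(a, b) = |f a - f b| ^ p := rfl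

lemma edgeTerm_nonneg {V : Type*} (p : ℝ) (f : V → ℝ) (e : Sym2 V) :
    0 ≤ edgeTerm p f e := by
  induction e using Sym2.inductionOn with
  | hf a b => exact Real.rpow_nonneg (abs_nonneg _) _

lemma rpow_superadd {p a b : ℝ} (hp : 1 ≤ p) (ha : 0 ≤ a) (hb : 0 ≤ b) :
    a ^ p + b ^ p ≤ (a + b) ^ p := by
  have := NNReal.add_rpow_le_rpow_add ⟨a, ha⟩ ⟨b, hb⟩ hp
  have h2 : ((⟨a, ha⟩ : NNReal) + ⟨b, hb⟩) = ⟨a + b, by positivity⟩ := rfl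
  replace this := NNReal.coe_le_coe.mpr this; simp only [NNReal.coe_add, NNReal.coe_rpow, NNReal.coe_mk] at this
  exact_mod_cast this

lemma rpow_sum_superadd {ι : Type*} {p x : ℝ} (hp : 1 ≤ p) (hx : 0 ≤ x)
    (s : Finset ι) (g : ι → ℝ) (hg : ∀ i ∈ s, 0 ≤ g i) :
    x ^ p + ∑ i ∈ s, g i ^ p ≤ (x + ∑ i ∈ s, g i) ^ p := by
  induction s using Finset.cons_induction with
  | empty => simp
  | cons a s ha ih =>
    have hga : 0 ≤ g a := hg a (Finset.mem_cons_self _ _)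
    have hsum : 0 ≤ ∑ i ∈ s, g i := Finset.sum_nonneg fun i hi => hg i (Finset.mem_cons_of_mem hi)
    have ih' := ih (fun i hi => hg i (Finset.mem_cons_of_mem hi))
    rw [Finset.sum_cons, Finset.sum_cons]
    calc x ^ p + (g a ^ p + ∑ i ∈ s, g i ^ p)
        = (x ^ p + ∑ i ∈ s, g i ^ p) + g a ^ p := by ring
      _ ≤ (x + ∑ i ∈ s, g i) ^ p + g a ^ p := by linarith
      _ ≤ ((x + ∑ i ∈ s, g i) + g a) ^ p := rpow_superadd hp (by positivity) hga
      _ = (x + (g a + ∑ i ∈ s, g i)) ^ p := by ring_nf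

lemma cross_of_walk {V : Type*} {G : SimpleGraph V} {U : Set V} {u x : V}
    (w : G.Walk u x) : u ∈ U → x ∉ U → ∃ a b, a ∈ U ∧ b ∉ U ∧ G.Adj a b := by
  induction w with
  | nil => intro hu hx; exact absurd hu hx
  | @cons a b c h q ih =>
      intro hu hx
      by_cases hv : b ∈ U
      · exact ih hv hx
      · exact ⟨a, b, hu, hv, h⟩

lemma exists_cross_edge {V : Type*} {G : SimpleGraph V} (hpc : G.Preconnected)
    {U : Set V} {u x : V} (hu : u ∈ U) (hx : x ∉ U) :
    ∃ a b, a ∈ U ∧ b ∉ U ∧ G.Adj a b := by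
  obtain ⟨w⟩ := hpc u x
  exact cross_of_walk w hu hx

lemma telescope_Ico (β : ℕ → ℝ) {a b : ℕ} (hab : a ≤ b) :
    ∑ k ∈ Finset.Ico a b, (β k - β (k + 1)) = β a - β b := by
  induction b, hab using Nat.le_induction with
  | base => simp
  | succ b hab ih => rw [Finset.sum_Ico_succ_top hab, ih]; ring

end FK

namespace FK

lemma transplant {V : Type*} [Fintype V] [DecidableEq V] (G : SimpleGraph V) (n : ℕ)
    (hn : 4 ≤ n) (hcard : G.edgeFinset.card = n) (hconn : G.Connected)
    {p : ℝ} (hp : 1 < p) (f : V → ℝ) (hf0 : f ≠ 0) (hfnn : ∀ v, 0 ≤ f v)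
    (hfbd : ∀ v, G.degree v = 1 → f v = 0) (hbd : ∃ v, G.degree v = 1) :
    ∃ g : Fin n → ℝ, g ≠ 0 ∧ (∀ v, (tadpole n 3).degree v = 1 → g v = 0) ∧
      rayleigh (tadpole n 3) p g ≤ rayleigh G p f := by
  classical
  have hp0 : (0:ℝ) < p := lt_trans one_pos hp
  have hpne : p ≠ 0 := ne_of_gt hp0
  set m := Fintype.card V with hm
  have hEne : G.edgeFinset.Nonempty := by
    rw [← Finset.card_pos, hcard]; omega
  obtain ⟨e0, he0⟩ := hEne
  have hm2 : 2 ≤ m := by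
    induction e0 using Sym2.inductionOn with
    | hf a b =>
      have hadj : G.Adj a b := by rwa [SimpleGraph.mem_edgeFinset, SimpleGraph.mem_edgeSet] at he0
      exact Fintype.one_lt_card_iff.mpr ⟨a, b, hadj.ne⟩
  have hm0 : 0 < m := by omega
  -- sorted enumeration
  set ε : V ≃ Fin m := Fintype.equivFin V with hε
  set σe : Fin m ≃ V :=
    (Fin.revPerm.trans (Tuple.sort (f ∘ ε.symm))).trans ε.symm with hσe
  set pos : V → ℕ := fun v => ((σe.symm v : Fin m) : ℕ) with hposdef
  set β : ℕ → ℝ := fun k => if h : k < m then f (σe ⟨k, h⟩) else 0 with hβdef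
  set δ : ℕ → ℝ := fun k => β k - β (k + 1) with hδdef
  have hβval : ∀ (j : Fin m), β (j : ℕ) = f (σe j) := by
    intro j
    simp only [hβdef, dif_pos j.isLt]
  have hβanti : ∀ {j k : ℕ}, j ≤ k → β k ≤ β j := by
    intro j k hjk
    by_cases hk : k < m
    · have hj : j < m := lt_of_le_of_lt hjk hk
      have : (⟨k, hk⟩ : Fin m).rev ≤ (⟨j, hj⟩ : Fin m).rev := by
        rw [Fin.rev_le_rev]; exact hjk
      have hmono := Tuple.monotone_sort (f ∘ ε.symm) this
      simp only [hβdef, dif_pos hk, dif_pos hj]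
      simpa [hσe, Function.comp] using hmono
    · by_cases hj : j < m
      · simp only [hβdef, dif_pos hj, dif_neg hk]
        exact hfnn _
      · simp [hβdef, dif_neg hk, dif_neg hj]
  have hβnn : ∀ k, 0 ≤ β k := by
    intro k
    by_cases hk : k < m
    · simp only [hβdef, dif_pos hk]; exact hfnn _
    · simp [hβdef, dif_neg hk]
  have hδnn : ∀ k, 0 ≤ δ k := fun k => sub_nonneg.mpr (hβanti (Nat.le_succ k))
  have hβpos : ∀ v, β (pos v) = f v := by
    intro v
    have : (⟨pos v, (σe.symm v).isLt⟩ : Fin m) = σe.symm v := by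
      apply Fin.ext; rfl
    simp only [hβdef, dif_pos (σe.symm v).isLt, this, Equiv.apply_symm_apply]
    exact dif_pos (σe.symm v).isLt
  have hposlt : ∀ v, pos v < m := fun v => (σe.symm v).isLt
  have hposinj : ∀ {a b : V}, pos a = pos b → a = b := by
    intro a b hab
    have : σe.symm a = σe.symm b := Fin.ext hab
    exact σe.symm.injective this
  have hposσ : ∀ (j : Fin m), pos (σe j) = (j : ℕ) := by
    intro j; simp only [hposdef, Equiv.symm_apply_apply]
  -- the minimum value of f is 0
  obtain ⟨vleaf, hvleaf⟩ := hbd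
  have hβm1 : ∀ k, m - 1 ≤ k → β k = 0 := by
    intro k hk
    have h1 : β k ≤ β (m - 1) := hβanti hk
    have h2 : β (m - 1) ≤ β (pos vleaf) := hβanti (by have := hposlt vleaf; omega)
    rw [hβpos, hfbd vleaf hvleaf] at h2
    exact le_antisymm (le_trans h1 h2) (hβnn k)
  have hδ0 : ∀ k, m - 1 ≤ k → δ k = 0 := by
    intro k hk
    simp only [hδdef]
    rw [hβm1 k hk, hβm1 (k+1) (by omega)]
    ring
  -- degrees
  have hdegpos : ∀ v : V, 0 < G.degree v := by
    intro v
    obtain ⟨u, hu⟩ := Fintype.exists_ne_of_one_lt_card (by omega : 1 < Fintype.card V) v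
    obtain ⟨a, b, ha, hb, hab⟩ :=
      exists_cross_edge hconn.preconnected (U := {v}) (u := v) (x := u) rfl hu
    rw [Set.mem_singleton_iff] at ha
    subst ha
    rw [← SimpleGraph.card_neighborFinset_eq_degree]
    exact Finset.card_pos.mpr ⟨b, (SimpleGraph.mem_neighborFinset _ _ _).mpr hab⟩
  have hdeg2 : ∀ v : V, 0 < f v → 2 ≤ G.degree v := by
    intro v hv
    have h1 : G.degree v ≠ 1 := fun h => by
      rw [hfbd v h] at hv; exact lt_irrefl _ hv
    have := hdegpos v
    omega
  -- counting : at most n-1 positive values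
  have hβn1 : ∀ k, n - 1 ≤ k → β k = 0 := by
    intro k hk
    have key : β (n-1) = 0 := by
      by_contra hne
      have hpos : 0 < β (n - 1) := lt_of_le_of_ne (hβnn _) (Ne.symm hne)
      have hnm : n - 1 < m := by
        by_contra hge
        exact hne (hβm1 _ (by omega))
      have hnlem : n ≤ m := by omega
      -- positive set
      set P : Finset V := Finset.univ.filter (fun v => 0 < f v) with hP
      set L : Finset V := Finset.univ.filter (fun v => G.degree v = 1) with hL
      have hLpos : 1 ≤ L.card := Finset.card_pos.mpr ⟨vleaf, by simp [hL, hvleaf]⟩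
      have hPL : Disjoint P L := by
        rw [Finset.disjoint_left]
        intro a haP haL
        rw [hP, Finset.mem_filter] at haP
        rw [hL, Finset.mem_filter] at haL
        rw [hfbd a haL.2] at haP
        exact lt_irrefl _ haP.2
      have hPLcard : P.card + L.card ≤ m := by
        rw [← Finset.card_union_of_disjoint hPL]
        exact Finset.card_le_card (Finset.subset_univ _)
      have hdegsum : ∑ v : V, G.degree v = 2 * n := by
        rw [SimpleGraph.sum_degrees_eq_twice_card_edges, hcard]
      have hdegbound : 2 * m - L.card ≤ 2 * n := by
        have h1 : ∑ v : V, (if G.degree v = 1 then 1 else 2) ≤ ∑ v : V, G.degree v := by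
          apply Finset.sum_le_sum
          intro v _
          by_cases h : G.degree v = 1 <;> simp [h]
          · have h2 := hdegpos v; omega
        have hsum2 : ∑ v : V, (if G.degree v = 1 then 1 else 2) = 2 * m - L.card := by
          rw [Finset.sum_ite]
          simp only [Finset.sum_const, smul_eq_mul]
          have hc : (Finset.univ.filter (fun v => ¬ G.degree v = 1)).card = m - L.card := by
            have h3 := Finset.card_filter_add_card_filter_not
              (s := (Finset.univ : Finset V)) (p := fun v => G.degree v = 1)
            have h4 : L.card ≤ m := by
              rw [hL]; exact le_trans (Finset.card_le_card (Finset.subset_univ _)) (le_of_eq rfl)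
            simp only [← hL] at h3
            have h5 : (Finset.univ : Finset V).card = m := rfl
            omega
          rw [hc, hL]
          have h4 : L.card ≤ m := Finset.card_le_card (Finset.subset_univ _)
          rw [← hL]
          omega
        rw [hsum2, hdegsum] at h1
        exact h1
      -- injection from Fin n to P
      have hcardP : n ≤ P.card := by
        have hinj : ∀ j : Fin n, σe (Fin.castLE hnlem j) ∈ P := by
          intro j
          rw [hP, Finset.mem_filter]
          refine ⟨Finset.mem_univ _, ?_⟩
          have h1 : β ((Fin.castLE hnlem j : Fin m) : ℕ) = f (σe (Fin.castLE hnlem j)) :=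
            hβval _
          have h2 : β ((Fin.castLE hnlem j : Fin m) : ℕ) ≥ β (n - 1) := by
            apply hβanti
            simp [Fin.castLE]
            omega
          rw [h1] at h2
          exact lt_of_lt_of_le hpos h2
        have : (Finset.univ : Finset (Fin n)).card ≤ P.card := by
          apply Finset.card_le_card_of_injOn (fun j => σe (Fin.castLE hnlem j))
          · intro j _; exact hinj j
          · intro a _ b _ hab
            have := σe.injective hab
            have : (Fin.castLE hnlem a) = Fin.castLE hnlem b := this
            exact Fin.castLE_injective hnlem this
        simpa using this
      omega
    have := hβanti hk
    rw [key] at this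
    exact le_antisymm this (hβnn k)
  -- crossing edges for each positive gap
  set cross : ℕ → Sym2 V → Prop :=
    fun k s => ∃ a b : V, s = s(a, b) ∧ pos a ≤ k ∧ k < pos b with hcrossdef
  have hyσ : ∀ y : V, σe ⟨pos y, hposlt y⟩ = y := by
    intro y
    have : (⟨pos y, hposlt y⟩ : Fin m) = σe.symm y := Fin.ext rfl
    rw [this, Equiv.apply_symm_apply]
  have hcrossk : ∀ k : ℕ, 0 < δ k → ∃ s, s ∈ G.edgeFinset ∧ cross k s := by
    intro k hk
    have hkm : k + 1 < m := by
      by_contra hge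
      have hz : δ k = 0 := by
        simp only [hδdef]
        rw [hβm1 k (by omega), hβm1 (k+1) (by omega)]; ring
      rw [hz] at hk; exact lt_irrefl _ hk
    have hu : σe ⟨0, by omega⟩ ∈ {v : V | pos v ≤ k} := by
      simp only [Set.mem_setOf_eq, hposσ]; omega
    have hx : σe ⟨k + 1, hkm⟩ ∉ {v : V | pos v ≤ k} := by
      simp only [Set.mem_setOf_eq, hposσ]; omega
    obtain ⟨a, b, ha, hb, hab⟩ := exists_cross_edge hconn.preconnected hu hx
    simp only [Set.mem_setOf_eq] at ha hb
    exact ⟨s(a, b), SimpleGraph.mem_edgeFinset.mpr hab, a, b, rfl, ha, by omega⟩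
  set A' : ℕ → Sym2 V := fun k => if h : 0 < δ k then Classical.choose (hcrossk k h) else e0
    with hA'def
  have hA'spec : ∀ k, 0 < δ k → A' k ∈ G.edgeFinset ∧ cross k (A' k) := by
    intro k hk
    simp only [hA'def, dif_pos hk]
    exact Classical.choose_spec (hcrossk k hk)
  have hnbr : ∀ v : V, 0 < f v → ∀ w : V, ∃ y, G.Adj v y ∧ y ≠ w := by
    intro v hv w
    have h2 : 1 < (G.neighborFinset v).card := by
      rw [SimpleGraph.card_neighborFinset_eq_degree]; exact hdeg2 v hv
    obtain ⟨y, hy, hyw⟩ := Finset.exists_mem_ne h2 w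
    exact ⟨y, (SimpleGraph.mem_neighborFinset _ _ _).mp hy, hyw⟩
  set x0 : V := σe ⟨0, by omega⟩ with hx0def
  set x1 : V := σe ⟨1, by omega⟩ with hx1def
  have hposx0 : pos x0 = 0 := hposσ _
  have hposx1 : pos x1 = 1 := hposσ _
  have hfx0 : f x0 = β 0 := by rw [hx0def, ← hβval]
  have hfx1 : f x1 = β 1 := by rw [hx1def, ← hβval]
  have hpos2 : ∀ y : V, y ≠ x0 → y ≠ x1 → 2 ≤ pos y := by
    intro y h0 h1
    by_contra hlt
    push_neg at hlt
    interval_cases h : pos y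
    · exact h0 (by rw [← hyσ y]; congr 1; exact Fin.ext (by simp [h]))
    · exact h1 (by rw [← hyσ y]; congr 1; exact Fin.ext (by simp [h]))
  have hpos1 : ∀ y : V, y ≠ x0 → 1 ≤ pos y := by
    intro y h0
    by_contra hlt
    push_neg at hlt
    have h : pos y = 0 := by omega
    exact h0 (by rw [← hyσ y]; congr 1; exact Fin.ext (by simp [h]))
  obtain ⟨e3, A, he3, hA, hA0, hA1⟩ :
      ∃ (e3 : Sym2 V) (A : ℕ → Sym2 V),
        e3 ∈ G.edgeFinset ∧
        (∀ k, 0 < δ k → A k ∈ G.edgeFinset ∧ cross k (A k)) ∧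
        (0 < δ 0 → cross 0 e3 ∧ A 0 ≠ e3) ∧
        (0 < δ 1 → cross 1 e3 ∧ A 1 ≠ e3) := by
    by_cases hd0 : 0 < δ 0 <;> by_cases hd1 : 0 < δ 1
    · -- both positive
      have hfx0p : 0 < f x0 := by
        rw [hfx0]
        have := hδnn 1
        simp only [hδdef] at hd0 hd1
        have := hβnn 2
        linarith
      have hfx1p : 0 < f x1 := by
        rw [hfx1]
        simp only [hδdef] at hd1
        have := hβnn 2
        linarith
      obtain ⟨y, hy, hyx1⟩ := hnbr x0 hfx0p x1
      have hyx0 : y ≠ x0 := hy.ne'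
      have hy2 : 2 ≤ pos y := hpos2 y hyx0 hyx1
      obtain ⟨y', hy', hy'y⟩ := hnbr x0 hfx0p y
      have hy'1 : 1 ≤ pos y' := hpos1 y' hy'.ne'
      obtain ⟨z, hz, hzx0⟩ := hnbr x1 hfx1p x0
      have hz2 : 2 ≤ pos z := hpos2 z hzx0 hz.ne'
      refine ⟨s(x0, y), fun k => if k = 0 then s(x0, y') else if k = 1 then s(x1, z) else A' k,
        SimpleGraph.mem_edgeFinset.mpr hy, ?_, ?_, ?_⟩
      · intro k hk
        by_cases h0 : k = 0
        · subst h0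
          simp only [if_pos rfl]
          exact ⟨SimpleGraph.mem_edgeFinset.mpr hy', x0, y', rfl, by omega, by omega⟩
        · by_cases h1 : k = 1
          · subst h1
            simp only [if_neg h0, if_pos rfl]
            exact ⟨SimpleGraph.mem_edgeFinset.mpr hz, x1, z, rfl, by omega, by omega⟩
          · simp only [if_neg h0, if_neg h1]
            exact hA'spec k hk
      · intro _
        refine ⟨⟨x0, y, rfl, by omega, by omega⟩, ?_⟩
        simp only [if_pos rfl]
        intro heq
        exact hy'y (Sym2.congr_right.mp heq)
      · intro _
        refine ⟨⟨x0, y, rfl, by omega, by omega⟩, ?_⟩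
        intro heq
        norm_num at heq
        rcases heq with ⟨h1, h2⟩ | ⟨h1, h2⟩
        · have h01 : (1 : ℕ) = 0 := by rw [← hposx1, h1, hposx0]
          omega
        · exact hzx0 h2
    · -- δ0 > 0, δ1 = 0
      have hfx0p : 0 < f x0 := by
        rw [hfx0]
        simp only [hδdef] at hd0
        have := hβnn 1
        linarith
      obtain ⟨y, hy, _⟩ := hnbr x0 hfx0p x0
      have hy1 : 1 ≤ pos y := hpos1 y hy.ne'
      obtain ⟨y', hy', hy'y⟩ := hnbr x0 hfx0p y
      have hy'1 : 1 ≤ pos y' := hpos1 y' hy'.ne'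
      refine ⟨s(x0, y), fun k => if k = 0 then s(x0, y') else A' k,
        SimpleGraph.mem_edgeFinset.mpr hy, ?_, ?_, fun h => absurd h hd1⟩
      · intro k hk
        by_cases h0 : k = 0
        · subst h0
          simp only [if_pos rfl]
          exact ⟨SimpleGraph.mem_edgeFinset.mpr hy', x0, y', rfl, by omega, by omega⟩
        · simp only [if_neg h0]
          exact hA'spec k hk
      · intro _
        refine ⟨⟨x0, y, rfl, by omega, by omega⟩, ?_⟩
        simp only [if_pos rfl]
        intro heq
        exact hy'y (Sym2.congr_right.mp heq)
    · -- δ0 = 0, δ1 > 0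
      have hβ01 : β 0 = β 1 := by
        have h1 := hδnn 0
        simp only [hδdef] at h1 hd0
        push_neg at hd0
        linarith
      have hfx1p : 0 < f x1 := by
        rw [hfx1]
        simp only [hδdef] at hd1
        have := hβnn 2
        linarith
      have hfx0p : 0 < f x0 := by rw [hfx0, hβ01, ← hfx1]; exact hfx1p
      obtain ⟨y, hy, hyx1⟩ := hnbr x0 hfx0p x1
      have hy2 : 2 ≤ pos y := hpos2 y hy.ne' hyx1
      obtain ⟨z, hz, hzx0⟩ := hnbr x1 hfx1p x0
      have hz2 : 2 ≤ pos z := hpos2 z hzx0 hz.ne'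
      refine ⟨s(x0, y), fun k => if k = 1 then s(x1, z) else A' k,
        SimpleGraph.mem_edgeFinset.mpr hy, ?_, fun h => absurd h hd0, ?_⟩
      · intro k hk
        by_cases h1 : k = 1
        · subst h1
          simp only [if_pos rfl]
          exact ⟨SimpleGraph.mem_edgeFinset.mpr hz, x1, z, rfl, by omega, by omega⟩
        · simp only [if_neg h1]
          exact hA'spec k hk
      · intro _
        refine ⟨⟨x0, y, rfl, by omega, by omega⟩, ?_⟩
        intro heq
        norm_num at heq
        rcases heq with ⟨h1, h2⟩ | ⟨h1, h2⟩
        · have h01 : (1 : ℕ) = 0 := by rw [← hposx1, h1, hposx0]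
          omega
        · exact hzx0 h2
    · exact ⟨e0, A', he0, hA'spec, fun h => absurd h hd0, fun h => absurd h hd1⟩
  -- per-edge inequality
  set D : Sym2 V → Finset ℕ :=
    fun s => (Finset.range (n-1)).filter (fun k => 0 < δ k ∧ A k = s) with hDdef
  have hEdge : ∀ s ∈ G.edgeFinset,
      (if s = e3 then δ 0 + δ 1 else 0) ^ p + ∑ k ∈ D s, δ k ^ p ≤ edgeTerm p f s := by
    have key : ∀ a b : V, G.Adj a b → pos a < pos b →
        (if s(a,b) = e3 then δ 0 + δ 1 else 0) ^ p + ∑ k ∈ D s(a,b), δ k ^ p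
          ≤ edgeTerm p f s(a,b) := by
      intro a b hadj hab
      have hle : pos a ≤ pos b := le_of_lt hab
      have habs : |f a - f b| = β (pos a) - β (pos b) := by
        rw [← hβpos a, ← hβpos b]
        exact abs_of_nonneg (sub_nonneg.mpr (hβanti hle))
      have htel : β (pos a) - β (pos b) = ∑ k ∈ Finset.Ico (pos a) (pos b), δ k :=
        (telescope_Ico β hle).symm
      have hcrIco : ∀ k, cross k s(a,b) → k ∈ Finset.Ico (pos a) (pos b) := by
        intro k hcr
        obtain ⟨a', b', heq, h1, h2⟩ := hcr
        rw [Sym2.eq_iff] at heq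
        rcases heq with ⟨ha', hb'⟩ | ⟨ha', hb'⟩
        · rw [← ha'] at h1; rw [← hb'] at h2
          exact Finset.mem_Ico.mpr ⟨h1, h2⟩
        · rw [← hb'] at h1; rw [← ha'] at h2
          omega
      have hDsub : D s(a,b) ⊆ Finset.Ico (pos a) (pos b) := by
        intro k hk
        simp only [hDdef, Finset.mem_filter] at hk
        obtain ⟨hkr, hkpos, hkA⟩ := hk
        exact hcrIco k (hkA ▸ (hA k hkpos).2)
      set X : ℝ := if s(a,b) = e3 then δ 0 + δ 1 else 0 with hX
      have hXnn : 0 ≤ X := by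
        rw [hX]; split
        · have := hδnn 0; have := hδnn 1; linarith
        · exact le_refl 0
      have hXsum : X + ∑ k ∈ D s(a,b), δ k ≤ ∑ k ∈ Finset.Ico (pos a) (pos b), δ k := by
        by_cases hse : s(a,b) = e3
        · set T0 : Finset ℕ := ({0, 1} : Finset ℕ).filter (fun k => 0 < δ k) with hT0
          have hT0sum : ∑ k ∈ T0, δ k = δ 0 + δ 1 := by
            rw [hT0, Finset.sum_filter_of_ne, Finset.sum_pair (by norm_num : (0:ℕ) ≠ 1)]
            intro x _ hne
            exact lt_of_le_of_ne (hδnn x) (Ne.symm hne)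
          have hT0sub : T0 ⊆ Finset.Ico (pos a) (pos b) := by
            intro k hk
            rw [hT0, Finset.mem_filter, Finset.mem_insert, Finset.mem_singleton] at hk
            obtain ⟨hk01, hkpos⟩ := hk
            rcases hk01 with rfl | rfl
            · exact hcrIco 0 (hse ▸ (hA0 hkpos).1)
            · exact hcrIco 1 (hse ▸ (hA1 hkpos).1)
          have hdisj : Disjoint T0 (D s(a,b)) := by
            rw [Finset.disjoint_left]
            intro k hk hkD
            rw [hT0, Finset.mem_filter, Finset.mem_insert, Finset.mem_singleton] at hk
            simp only [hDdef, Finset.mem_filter] at hkD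
            obtain ⟨hk01, hkpos⟩ := hk
            obtain ⟨_, _, hkA⟩ := hkD
            rcases hk01 with rfl | rfl
            · exact (hA0 hkpos).2 (hkA.trans hse)
            · exact (hA1 hkpos).2 (hkA.trans hse)
          calc X + ∑ k ∈ D s(a,b), δ k
              = ∑ k ∈ T0, δ k + ∑ k ∈ D s(a,b), δ k := by rw [hX, if_pos hse, hT0sum]
            _ = ∑ k ∈ T0 ∪ D s(a,b), δ k := (Finset.sum_union hdisj).symm
            _ ≤ ∑ k ∈ Finset.Ico (pos a) (pos b), δ k :=
                Finset.sum_le_sum_of_subset_of_nonneg (Finset.union_subset hT0sub hDsub)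
                  (fun i _ _ => hδnn i)
        · rw [hX, if_neg hse, zero_add]
          exact Finset.sum_le_sum_of_subset_of_nonneg hDsub (fun i _ _ => hδnn i)
      calc X ^ p + ∑ k ∈ D s(a,b), δ k ^ p
          ≤ (X + ∑ k ∈ D s(a,b), δ k) ^ p :=
            rpow_sum_superadd (le_of_lt hp) hXnn _ _ (fun i _ => hδnn i)
        _ ≤ (∑ k ∈ Finset.Ico (pos a) (pos b), δ k) ^ p := by
            apply Real.rpow_le_rpow _ hXsum (le_of_lt hp0)
            have : 0 ≤ ∑ k ∈ D s(a,b), δ k := Finset.sum_nonneg (fun i _ => hδnn i)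
            linarith
        _ = edgeTerm p f s(a,b) := by rw [edgeTerm_mk, habs, htel]
    intro s hs
    revert hs
    induction s using Sym2.inductionOn with
    | hf a b =>
      intro hs
      have hadj : G.Adj a b := by rwa [SimpleGraph.mem_edgeFinset, SimpleGraph.mem_edgeSet] at hs
      have hne : pos a ≠ pos b := fun h => hadj.ne (hposinj h)
      rcases lt_or_gt_of_ne hne with h | h
      · exact key a b hadj h
      · rw [Sym2.eq_swap (a := a) (b := b)]
        exact key b a hadj.symm h
  -- numerator bound
  have hNf : (δ 0 + δ 1) ^ p + ∑ k ∈ Finset.range (n-1), δ k ^ p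
      ≤ ∑ e ∈ G.edgeFinset, edgeTerm p f e := by
    have h1 := Finset.sum_le_sum hEdge
    rw [Finset.sum_add_distrib] at h1
    have h2 : ∑ s ∈ G.edgeFinset, (if s = e3 then δ 0 + δ 1 else 0) ^ p
        = (δ 0 + δ 1) ^ p := by
      have hite : ∀ s : Sym2 V, (if s = e3 then δ 0 + δ 1 else 0) ^ p
          = if s = e3 then (δ 0 + δ 1) ^ p else 0 := by
        intro s
        split
        · rfl
        · exact Real.zero_rpow hpne
      simp_rw [hite]
      rw [Finset.sum_ite_eq' G.edgeFinset e3 (fun _ => (δ 0 + δ 1) ^ p), if_pos he3]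
    have h3 : ∑ s ∈ G.edgeFinset, ∑ k ∈ D s, δ k ^ p
        = ∑ k ∈ (Finset.range (n-1)).filter (fun k => 0 < δ k), δ k ^ p := by
      have hre : ∀ s : Sym2 V, D s
          = ((Finset.range (n-1)).filter (fun k => 0 < δ k)).filter (fun k => A k = s) := by
        intro s; simp only [hDdef, Finset.filter_filter]
      simp_rw [hre]
      exact Finset.sum_fiberwise_of_maps_to
        (fun k hk => (hA k (Finset.mem_filter.mp hk).2).1) _
    have h4 : ∑ k ∈ (Finset.range (n-1)).filter (fun k => 0 < δ k), δ k ^ p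
        = ∑ k ∈ Finset.range (n-1), δ k ^ p := by
      apply Finset.sum_subset (Finset.filter_subset _ _)
      intro x hx hnx
      have hxz : δ x = 0 := by
        have h5 := hδnn x
        by_contra hne
        exact hnx (Finset.mem_filter.mpr ⟨hx, lt_of_le_of_ne h5 (Ne.symm hne)⟩)
      rw [hxz, Real.zero_rpow hpne]
    rw [h2, h3, h4] at h1
    exact h1
  -- the transplanted function on the tadpole
  set tp := tadpole n 3 with htpdef
  set g : Fin n → ℝ := fun v => β v.val with hgdef
  have hβ0pos : 0 < β 0 := by
    obtain ⟨v, hv⟩ := Function.ne_iff.mp hf0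
    have hfv : 0 < f v := lt_of_le_of_ne (hfnn v) (Ne.symm hv)
    have h1 : f v ≤ β 0 := by rw [← hβpos v]; exact hβanti (Nat.zero_le _)
    linarith
  have hg0 : g ≠ 0 := by
    intro h
    have h1 : g ⟨0, by omega⟩ = 0 := by rw [h]; rfl
    have h2 : g ⟨0, by omega⟩ = β 0 := rfl
    rw [h2] at h1
    linarith
  have htadj : ∀ a b : Fin n, tp.Adj a b ↔ a ≠ b ∧
      ((a.val + 1 = b.val ∨ (a.val = 0 ∧ b.val = 2)) ∨
       (b.val + 1 = a.val ∨ (b.val = 0 ∧ a.val = 2))) := by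
    intro a b
    rw [htpdef]
    show (SimpleGraph.fromRel _).Adj a b ↔ _
    rw [SimpleGraph.fromRel_adj]
  have hgbd : ∀ v : Fin n, tp.degree v = 1 → g v = 0 := by
    intro v hv
    by_cases hvtop : v.val = n - 1
    · show β v.val = 0
      rw [hvtop]
      exact hβn1 _ (le_refl _)
    · exfalso
      have hvlt : v.val < n - 1 := by have := v.isLt; omega
      have hdeg : 1 < tp.degree v := by
        rw [← SimpleGraph.card_neighborFinset_eq_degree]
        apply Finset.one_lt_card.mpr
        by_cases h0 : v.val = 0
        · refine ⟨⟨2, by omega⟩, ?_, ⟨1, by omega⟩, ?_, ?_⟩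
          · rw [SimpleGraph.mem_neighborFinset, htadj]
            exact ⟨by intro h; have := congrArg Fin.val h; simp [h0] at this, Or.inl (Or.inr ⟨h0, rfl⟩)⟩
          · rw [SimpleGraph.mem_neighborFinset, htadj]
            exact ⟨by intro h; have := congrArg Fin.val h; simp [h0] at this, Or.inl (Or.inl (by simp [h0]))⟩
          · intro h; have := congrArg Fin.val h; simp at this
        · refine ⟨⟨v.val - 1, by omega⟩, ?_, ⟨v.val + 1, by omega⟩, ?_, ?_⟩
          · rw [SimpleGraph.mem_neighborFinset, htadj]
            refine ⟨?_, Or.inr (Or.inl (by simp; omega))⟩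
            intro h; have := congrArg Fin.val h; simp at this; omega
          · rw [SimpleGraph.mem_neighborFinset, htadj]
            refine ⟨?_, Or.inl (Or.inl (by simp))⟩
            intro h; have := congrArg Fin.val h; simp at this
          · intro h; have := congrArg Fin.val h; simp at this
      omega
  -- edge set of the tadpole
  set i : Fin (n-1) → Sym2 (Fin n) :=
    fun k => s((⟨k.val, by have := k.isLt; omega⟩ : Fin n),
               (⟨k.val + 1, by have := k.isLt; omega⟩ : Fin n)) with hidef
  set v02 : Sym2 (Fin n) := s((⟨0, by omega⟩ : Fin n), (⟨2, by omega⟩ : Fin n)) with hv02def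
  have hEsub : tp.edgeFinset ⊆ Finset.univ.image i ∪ {v02} := by
    intro e
    induction e using Sym2.inductionOn with
    | hf a b =>
      intro he
      have hadj : tp.Adj a b := by rwa [SimpleGraph.mem_edgeFinset, SimpleGraph.mem_edgeSet] at he
      rw [htadj] at hadj
      obtain ⟨hne, hcases⟩ := hadj
      have hmk : ∀ c d : Fin n, c.val + 1 = d.val → s(c, d) ∈ Finset.univ.image i ∪ {v02} := by
        intro c d hcd
        apply Finset.mem_union_left
        apply Finset.mem_image.mpr
        refine ⟨⟨c.val, by have := d.isLt; omega⟩, Finset.mem_univ _, ?_⟩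
        rw [hidef]
        have h1 : (⟨c.val, by have := c.isLt; omega⟩ : Fin n) = c := rfl
        have h2 : (⟨c.val + 1, by have := d.isLt; omega⟩ : Fin n) = d := Fin.ext (by simpa using hcd)
        simp only [h2]
      have hmk02 : ∀ c d : Fin n, c.val = 0 → d.val = 2 → s(c, d) ∈ Finset.univ.image i ∪ {v02} := by
        intro c d hc hd
        apply Finset.mem_union_right
        rw [Finset.mem_singleton, hv02def]
        have h1 : c = (⟨0, by omega⟩ : Fin n) := Fin.ext hc
        have h2 : d = (⟨2, by omega⟩ : Fin n) := Fin.ext hd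
        rw [h1, h2]
      rcases hcases with (h | ⟨h0, h2⟩) | (h | ⟨h0, h2⟩)
      · exact hmk a b h
      · exact hmk02 a b h0 h2
      · rw [Sym2.eq_swap]; exact hmk b a h
      · rw [Sym2.eq_swap]; exact hmk02 b a h0 h2
  have hNg : ∑ e ∈ tp.edgeFinset, edgeTerm p g e
      ≤ (δ 0 + δ 1) ^ p + ∑ k ∈ Finset.range (n-1), δ k ^ p := by
    have h1 : ∑ e ∈ tp.edgeFinset, edgeTerm p g e
        ≤ ∑ e ∈ Finset.univ.image i ∪ {v02}, edgeTerm p g e :=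
      Finset.sum_le_sum_of_subset_of_nonneg hEsub (fun e _ _ => edgeTerm_nonneg p g e)
    have h2 : ∑ e ∈ Finset.univ.image i ∪ {v02}, edgeTerm p g e
        ≤ ∑ e ∈ Finset.univ.image i, edgeTerm p g e + ∑ e ∈ ({v02} : Finset (Sym2 (Fin n))), edgeTerm p g e := by
      have h3 := Finset.sum_union_inter (s₁ := Finset.univ.image i)
        (s₂ := ({v02} : Finset (Sym2 (Fin n)))) (f := edgeTerm p g)
      have h4 : 0 ≤ ∑ e ∈ Finset.univ.image i ∩ {v02}, edgeTerm p g e :=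
        Finset.sum_nonneg (fun e _ => edgeTerm_nonneg p g e)
      linarith
    have hinj : ∀ x ∈ (Finset.univ : Finset (Fin (n-1))), ∀ y ∈ Finset.univ, i x = i y → x = y := by
      intro x _ y _ hxy
      rw [hidef] at hxy
      rw [Sym2.eq_iff] at hxy
      rcases hxy with ⟨h1, _⟩ | ⟨h1, h2⟩
      · exact Fin.ext (by have := congrArg Fin.val h1; simpa using this)
      · have ha := congrArg Fin.val h1
        have hb := congrArg Fin.val h2
        simp at ha hb
        omega
    have h5 : ∑ e ∈ Finset.univ.image i, edgeTerm p g e = ∑ k : Fin (n-1), edgeTerm p g (i k) :=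
      Finset.sum_image hinj
    have h6 : ∀ k : Fin (n-1), edgeTerm p g (i k) = δ k.val ^ p := by
      intro k
      rw [hidef, edgeTerm_mk]
      show |δ k.val| ^ p = δ k.val ^ p
      rw [abs_of_nonneg (hδnn k.val)]
    have h7 : ∑ k : Fin (n-1), edgeTerm p g (i k) = ∑ k ∈ Finset.range (n-1), δ k ^ p := by
      rw [Finset.sum_congr rfl (fun k _ => h6 k)]
      exact Fin.sum_univ_eq_sum_range (fun k => δ k ^ p) (n-1)
    have h8 : ∑ e ∈ ({v02} : Finset (Sym2 (Fin n))), edgeTerm p g e = (δ 0 + δ 1) ^ p := by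
      rw [Finset.sum_singleton, hv02def, edgeTerm_mk]
      show |β 0 - β 2| ^ p = (δ 0 + δ 1) ^ p
      have h9 : β 0 - β 2 = δ 0 + δ 1 := by simp only [hδdef]; ring
      rw [h9, abs_of_nonneg (by have := hδnn 0; have := hδnn 1; linarith)]
    rw [h5, h7, h8] at h2
    calc ∑ e ∈ tp.edgeFinset, edgeTerm p g e
        ≤ ∑ k ∈ Finset.range (n-1), δ k ^ p + (δ 0 + δ 1) ^ p := le_trans h1 h2
      _ = (δ 0 + δ 1) ^ p + ∑ k ∈ Finset.range (n-1), δ k ^ p := by ring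
  have hDg : ∑ v : Fin n, |g v| ^ p = ∑ v : V, |f v| ^ p := by
    have h1 : ∑ v : Fin n, |g v| ^ p = ∑ k ∈ Finset.range n, β k ^ p := by
      rw [← Fin.sum_univ_eq_sum_range (fun k => β k ^ p) n]
      apply Finset.sum_congr rfl
      intro v _
      show |β v.val| ^ p = β v.val ^ p
      rw [abs_of_nonneg (hβnn _)]
    have h2 : ∑ v : V, |f v| ^ p = ∑ k ∈ Finset.range m, β k ^ p := by
      rw [← Fin.sum_univ_eq_sum_range (fun k => β k ^ p) m]
      rw [← Equiv.sum_comp σe (fun v => |f v| ^ p)]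
      apply Finset.sum_congr rfl
      intro j _
      rw [← hβval j, abs_of_nonneg (hβnn _)]
    rw [h1, h2]
    rcases le_total m n with h | h
    · symm
      apply Finset.sum_subset (Finset.range_subset_range.mpr h)
      intro x _ hnx
      rw [Finset.mem_range] at hnx
      rw [hβm1 x (by omega), Real.zero_rpow hpne]
    · apply Finset.sum_subset (Finset.range_subset_range.mpr h)
      intro x _ hnx
      rw [Finset.mem_range] at hnx
      rw [hβn1 x (by omega), Real.zero_rpow hpne]
  have hDf : 0 < ∑ v : V, |f v| ^ p := by
    obtain ⟨v, hv⟩ := Function.ne_iff.mp hf0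
    apply Finset.sum_pos' (fun w _ => Real.rpow_nonneg (abs_nonneg _) p)
    exact ⟨v, Finset.mem_univ v, Real.rpow_pos_of_pos (abs_pos.mpr hv) p⟩
  refine ⟨g, hg0, hgbd, ?_⟩
  show (∑ e ∈ tp.edgeFinset, edgeTerm p g e) / (∑ v : Fin n, |g v| ^ p)
      ≤ (∑ e ∈ G.edgeFinset, edgeTerm p f e) / (∑ v : V, |f v| ^ p)
  rw [hDg]
  apply div_le_div_of_nonneg_right ?_ hDf.le
  exact le_trans hNg hNf

end FK

namespace FK

lemma rayleigh_nonneg {V : Type*} [Fintype V] [DecidableEq V] (G : SimpleGraph V)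
    (p : ℝ) (f : V → ℝ) : 0 ≤ rayleigh G p f :=
  div_nonneg (Finset.sum_nonneg fun e _ => edgeTerm_nonneg p f e)
    (Finset.sum_nonneg fun v _ => Real.rpow_nonneg (abs_nonneg _) p)

lemma rayleigh_abs_le {V : Type*} [Fintype V] [DecidableEq V] (G : SimpleGraph V)
    {p : ℝ} (hp : 0 ≤ p) (f : V → ℝ) :
    rayleigh G p (fun v => |f v|) ≤ rayleigh G p f := by
  have hden : ∑ v : V, |(fun v => |f v|) v| ^ p = ∑ v : V, |f v| ^ p := by
    apply Finset.sum_congr rfl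
    intro v _
    rw [abs_abs]
  show (∑ e ∈ G.edgeFinset, edgeTerm p (fun v => |f v|) e) / _ ≤ _
  rw [hden]
  apply div_le_div_of_nonneg_right ?_
    (Finset.sum_nonneg fun v _ => Real.rpow_nonneg (abs_nonneg _) p)
  apply Finset.sum_le_sum
  intro e _
  induction e using Sym2.inductionOn with
  | hf a b =>
    rw [edgeTerm_mk, edgeTerm_mk]
    exact Real.rpow_le_rpow (abs_nonneg _) (abs_abs_sub_abs_le_abs_sub _ _) hp

end FK


/-- Faber–Krahn inequality for graphs with a fixed number of edges. -/
theorem faber_krahn_edges {V : Type*} [Fintype V] [DecidableEq V] (G : SimpleGraph V)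
    (n : ℕ) (hn : 4 ≤ n) (hcard : G.edgeFinset.card = n) (hconn : G.Connected)
    (hbd : ∃ v, G.degree v = 1) {p : ℝ} (hp : 1 < p) :
    lambda1 G p ≥ lambda1 (tadpole n 3) p := by
  classical
  rw [ge_iff_le]
  -- find a vertex of degree ≠ 1
  obtain ⟨u, hu⟩ := hbd
  have hune : (G.neighborFinset u).card = 1 := by
    rw [SimpleGraph.card_neighborFinset_eq_degree]; exact hu
  obtain ⟨w, hw⟩ := Finset.card_eq_one.mp hune
  have hwadj : G.Adj u w := by
    rw [← SimpleGraph.mem_neighborFinset, hw]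
    exact Finset.mem_singleton_self w
  have hv0 : ∃ v0 : V, G.degree v0 ≠ 1 := by
    by_cases hdw : G.degree w = 1
    · exfalso
      have hwne : (G.neighborFinset w).card = 1 := by
        rw [SimpleGraph.card_neighborFinset_eq_degree]; exact hdw
      obtain ⟨w', hw'⟩ := Finset.card_eq_one.mp hwne
      have huw' : u ∈ G.neighborFinset w := (SimpleGraph.mem_neighborFinset _ _ _).mpr hwadj.symm
      have hw'u : w' = u := by
        rw [hw', Finset.mem_singleton] at huw'
        exact huw'.symm
      rw [hw'u] at hw'
      have hall : ∀ x : V, x ∈ ({u, w} : Set V) := by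
        intro x
        by_contra hx
        obtain ⟨a, b, ha, hb, hab⟩ := FK.exists_cross_edge hconn.preconnected
          (U := {u, w}) (Set.mem_insert u _) hx
        rcases ha with rfl | ha
        · have : b ∈ G.neighborFinset a := (SimpleGraph.mem_neighborFinset _ _ _).mpr hab
          rw [hw, Finset.mem_singleton] at this
          exact hb (this ▸ Set.mem_insert_of_mem _ rfl)
        · rw [Set.mem_singleton_iff] at ha
          subst ha
          have : b ∈ G.neighborFinset a := (SimpleGraph.mem_neighborFinset _ _ _).mpr hab
          rw [hw', Finset.mem_singleton] at this
          exact hb (this ▸ Set.mem_insert _ _)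
      have hsub : (Finset.univ : Finset V) ⊆ {u, w} := by
        intro x _
        rcases hall x with h | h
        · rw [h]; exact Finset.mem_insert_self _ _
        · rw [Set.mem_singleton_iff] at h
          rw [h]
          exact Finset.mem_insert_of_mem (Finset.mem_singleton_self _)
      have hle2 : ∑ v : V, G.degree v ≤ 2 := by
        calc ∑ v : V, G.degree v ≤ ∑ v ∈ ({u, w} : Finset V), G.degree v :=
              Finset.sum_le_sum_of_subset hsub
          _ = G.degree u + G.degree w := Finset.sum_pair hwadj.ne
          _ = 2 := by rw [hu, hdw]
      rw [SimpleGraph.sum_degrees_eq_twice_card_edges, hcard] at hle2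
      omega
    · exact ⟨w, hdw⟩
  obtain ⟨v0, hv0⟩ := hv0
  have hSG : {r | ∃ f : V → ℝ, f ≠ 0 ∧ (∀ v, G.degree v = 1 → f v = 0) ∧
      r = rayleigh G p f}.Nonempty := by
    refine ⟨rayleigh G p (fun v => if v = v0 then 1 else 0),
      (fun v => if v = v0 then 1 else 0), ?_, ?_, rfl⟩
    · intro h
      have := congrFun h v0
      simp at this
    · intro v hv
      have : v ≠ v0 := fun h => hv0 (h ▸ hv)
      simp [this]
  rw [lambda1, lambda1]
  apply le_csInf hSG
  rintro b ⟨f, hf0, hfbd, rfl⟩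
  have hf'0 : (fun v => |f v|) ≠ 0 := by
    intro h
    apply hf0
    funext v
    have := congrFun h v
    simpa using this
  have hf'bd : ∀ v, G.degree v = 1 → |f v| = 0 := fun v hv => by rw [hfbd v hv]; exact abs_zero
  obtain ⟨g, hg0, hgbd, hgle⟩ := FK.transplant G n hn hcard hconn hp (fun v => |f v|)
    hf'0 (fun v => abs_nonneg _) hf'bd ⟨u, hu⟩
  have h1 : sInf {r | ∃ f : Fin n → ℝ, f ≠ 0 ∧ (∀ v, (tadpole n 3).degree v = 1 → f v = 0) ∧
      r = rayleigh (tadpole n 3) p f} ≤ rayleigh (tadpole n 3) p g := by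
    apply csInf_le
    · refine ⟨0, ?_⟩
      rintro r ⟨h, _, _, rfl⟩
      exact FK.rayleigh_nonneg _ _ _
    · exact ⟨g, hg0, hgbd, rfl⟩
  calc sInf {r | ∃ f : Fin n → ℝ, f ≠ 0 ∧ (∀ v, (tadpole n 3).degree v = 1 → f v = 0) ∧
      r = rayleigh (tadpole n 3) p f} ≤ rayleigh (tadpole n 3) p g := h1
    _ ≤ rayleigh G p (fun v => |f v|) := hgle
    _ ≤ rayleigh G p f := FK.rayleigh_abs_le G (le_of_lt (lt_trans one_pos hp)) f
end
end

section
/- For any n ≥ 5 and any p > 1, λ_{1,p}(T_{n,4}) > λ_{1,p}(T_{n,3}). -/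
open scoped Classical

noncomputable section

namespace TadAux

open Finset

variable {n : ℕ}

def cf (n : ℕ) [NeZero n] (k : ℕ) : Fin n := ⟨k % n, Nat.mod_lt _ (Nat.pos_of_ne_zero (NeZero.ne n))⟩

lemma cf_val_mod [NeZero n] (k : ℕ) : (cf n k).val = k % n := rfl

lemma cf_val [NeZero n] {k : ℕ} (h : k < n) : (cf n k).val = k := Nat.mod_eq_of_lt h

lemma cf_self [NeZero n] (v : Fin n) : cf n v.val = v := Fin.ext (cf_val v.isLt)

@[simp] lemma edgeTerm_mk {V : Type*} (p : ℝ) (f : V → ℝ) (x y : V) :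
    edgeTerm p f s(x, y) = |f x - f y| ^ p := rfl

lemma tadpole_adj {i : ℕ} {a b : Fin n} :
    (tadpole n i).Adj a b ↔ a ≠ b ∧ (a.val + 1 = b.val ∨ b.val + 1 = a.val ∨
      (a.val = 0 ∧ b.val = i - 1) ∨ (b.val = 0 ∧ a.val = i - 1)) := by
  simp only [tadpole, SimpleGraph.fromRel_adj]
  tauto

lemma tadpole_edgeFinset [NeZero n] {i : ℕ} (h3 : 3 ≤ i) (hin : i < n) :
    (tadpole n i).edgeFinset =
      ((range (n-1)).image fun k => s(cf n k, cf n (k+1))) ∪ {s(cf n 0, cf n (i-1))} := by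
  have hn0 : 0 < n := Nat.pos_of_ne_zero (NeZero.ne n)
  ext e
  induction e using Sym2.ind with
  | _ a b =>
    have ha := a.isLt; have hb := b.isLt
    simp only [SimpleGraph.mem_edgeFinset, SimpleGraph.mem_edgeSet, tadpole_adj,
      mem_union, mem_image, mem_range, mem_singleton, Sym2.eq_iff, Fin.ext_iff, cf_val_mod,
      ne_eq]
    constructor
    · rintro ⟨hne, h | h | ⟨h0, hi1⟩ | ⟨h0, hi1⟩⟩
      · refine Or.inl ⟨a.val, by omega, Or.inl ⟨?_, ?_⟩⟩ <;>
          rw [Nat.mod_eq_of_lt (by omega)] <;> omega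
      · refine Or.inl ⟨b.val, by omega, Or.inr ⟨?_, ?_⟩⟩ <;>
          rw [Nat.mod_eq_of_lt (by omega)] <;> omega
      · refine Or.inr (Or.inl ⟨?_, ?_⟩) <;> rw [Nat.mod_eq_of_lt (by omega)] <;> omega
      · refine Or.inr (Or.inr ⟨?_, ?_⟩) <;> rw [Nat.mod_eq_of_lt (by omega)] <;> omega
    · rintro (⟨k, hk, ⟨h1, h2⟩ | ⟨h1, h2⟩⟩ | ⟨h1, h2⟩ | ⟨h1, h2⟩) <;>
        rw [Nat.mod_eq_of_lt (by omega)] at h1 h2 <;>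
        exact ⟨by omega, by omega⟩

lemma energy_eval [NeZero n] {i : ℕ} (h3 : 3 ≤ i) (hin : i < n) (p : ℝ) (H : ℕ → ℝ) :
    ∑ e ∈ (tadpole n i).edgeFinset, edgeTerm p (fun v : Fin n => H v.val) e
      = (∑ k ∈ range (n-1), |H k - H (k+1)| ^ p) + |H 0 - H (i-1)| ^ p := by
  have hn0 : 0 < n := Nat.pos_of_ne_zero (NeZero.ne n)
  rw [tadpole_edgeFinset h3 hin, sum_union, sum_image, sum_singleton, edgeTerm_mk]
  · congr 1
    · refine sum_congr rfl fun k hk => ?_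
      rw [mem_range] at hk
      rw [edgeTerm_mk, cf_val (by omega), cf_val (by omega)]
    · rw [cf_val (by omega), cf_val (by omega)]
  · intro k hk l hl hkl
    rw [mem_coe, mem_range] at hk hl
    rcases Sym2.eq_iff.1 hkl with ⟨h1, h2⟩ | ⟨h1, h2⟩ <;>
      rw [Fin.ext_iff, cf_val_mod, cf_val_mod, Nat.mod_eq_of_lt (by omega),
        Nat.mod_eq_of_lt (by omega)] at h1 h2 <;> omega
  · rw [disjoint_singleton_right]
    intro hmem
    obtain ⟨k, hk, hkl⟩ := mem_image.1 hmem
    rw [mem_range] at hk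
    rcases Sym2.eq_iff.1 hkl with ⟨h1, h2⟩ | ⟨h1, h2⟩ <;>
      rw [Fin.ext_iff, cf_val_mod, cf_val_mod, Nat.mod_eq_of_lt (by omega),
        Nat.mod_eq_of_lt (by omega)] at h1 h2 <;> omega

lemma mass_eval [NeZero n] (p : ℝ) (H : ℕ → ℝ) :
    (∑ v : Fin n, |(fun v : Fin n => H v.val) v| ^ p) = ∑ k ∈ range n, |H k| ^ p :=
  Fin.sum_univ_eq_sum_range (fun k => |H k| ^ p) n

lemma degree_last [NeZero n] {i : ℕ} (h3 : 3 ≤ i) (hin : i < n) (hn5 : 5 ≤ n) :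
    (tadpole n i).degree (cf n (n-1)) = 1 := by
  have : (tadpole n i).neighborFinset (cf n (n-1)) = {cf n (n-2)} := by
    ext u
    have hu := u.isLt
    rw [SimpleGraph.mem_neighborFinset, mem_singleton, tadpole_adj]
    have h1 : (cf n (n-1)).val = n-1 := cf_val (by omega)
    have h2 : (cf n (n-2)).val = n-2 := cf_val (by omega)
    constructor
    · rintro ⟨hne, h | h | ⟨h0, hi1⟩ | ⟨h0, hi1⟩⟩ <;>
        · refine Fin.ext ?_
          rw [h2]
          omega
    · rintro rfl
      constructor
      · rw [ne_eq, Fin.ext_iff, h1, h2]; omega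
      · exact Or.inr (Or.inl (by omega))
  rw [← SimpleGraph.card_neighborFinset_eq_degree, this, card_singleton]

lemma degree_ne_one [NeZero n] {i : ℕ} (h3 : 3 ≤ i) (hin : i < n) {v : Fin n}
    (hv : v.val < n - 1) : (tadpole n i).degree v ≠ 1 := by
  have hn0 : 0 < n := Nat.pos_of_ne_zero (NeZero.ne n)
  have key : ∃ u1 u2 : Fin n, u1 ≠ u2 ∧ (tadpole n i).Adj v u1 ∧ (tadpole n i).Adj v u2 := by
    by_cases h0 : v.val = 0
    · refine ⟨cf n 1, cf n (i-1), ?_, ?_, ?_⟩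
      · rw [ne_eq, Fin.ext_iff, cf_val (by omega), cf_val (by omega)]; omega
      · rw [tadpole_adj, ne_eq, Fin.ext_iff, cf_val (by omega)]
        exact ⟨by omega, Or.inl (by omega)⟩
      · rw [tadpole_adj, ne_eq, Fin.ext_iff, cf_val (by omega)]
        exact ⟨by omega, Or.inr (Or.inr (Or.inl ⟨by omega, by omega⟩))⟩
    · refine ⟨cf n (v.val - 1), cf n (v.val + 1), ?_, ?_, ?_⟩
      · rw [ne_eq, Fin.ext_iff, cf_val (by omega), cf_val (by omega)]; omega
      · rw [tadpole_adj, ne_eq, Fin.ext_iff, cf_val (by omega)]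
        exact ⟨by omega, Or.inr (Or.inl (by omega))⟩
      · rw [tadpole_adj, ne_eq, Fin.ext_iff, cf_val (by omega)]
        exact ⟨by omega, Or.inl (by omega)⟩
  obtain ⟨u1, u2, hne, h1, h2⟩ := key
  have hsub : {u1, u2} ⊆ (tadpole n i).neighborFinset v := by
    intro u hu
    rw [mem_insert, mem_singleton] at hu
    rw [SimpleGraph.mem_neighborFinset]
    rcases hu with rfl | rfl <;> assumption
  have h2le : 2 ≤ (tadpole n i).degree v := by
    rw [← SimpleGraph.card_neighborFinset_eq_degree]
    calc 2 = ({u1, u2} : Finset (Fin n)).card := (card_pair hne).symm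
    _ ≤ _ := card_le_card hsub
  omega

lemma rpow_eq_zero_of {p : ℝ} (hp : 0 < p) {x : ℝ} (hx : 0 ≤ x) (h : x ^ p = 0) : x = 0 := by
  by_contra hne
  exact absurd h (ne_of_gt (Real.rpow_pos_of_pos (lt_of_le_of_ne hx (Ne.symm hne)) p))

/-- Two-point Minkowski folding inequality. -/
lemma fold_ineq {p : ℝ} (hp : 1 ≤ p) {x y c : ℝ} (hx : 0 ≤ x) (hy : 0 ≤ y) (hc : 0 ≤ c) :
    2 * |c - ((x ^ p + y ^ p) / 2) ^ p⁻¹| ^ p ≤ |c - x| ^ p + |c - y| ^ p := by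
  have hp0 : 0 < p := lt_of_lt_of_le one_pos hp
  set D : ℝ := (|c - x| ^ p + |c - y| ^ p) ^ (1/p) with hD
  set P : ℝ := (x ^ p + y ^ p) ^ (1/p) with hP
  have hDnn : 0 ≤ D := Real.rpow_nonneg (by positivity) _
  have hPnn : 0 ≤ P := Real.rpow_nonneg (by positivity) _
  have mink : ∀ f g : Fin 2 → ℝ, (∑ i, |f i + g i| ^ p) ^ (1/p) ≤
      (∑ i, |f i| ^ p) ^ (1/p) + (∑ i, |g i| ^ p) ^ (1/p) :=
    fun f g => Real.Lp_add_le Finset.univ f g hp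
  set s : ℝ := 2 ^ (1/p) with hs'
  have hs : 0 < s := Real.rpow_pos_of_pos two_pos _
  have h2c : (2 * c ^ p) ^ (1/p) = s * c := by
    rw [Real.mul_rpow (by norm_num) (Real.rpow_nonneg hc p), one_div,
      Real.rpow_rpow_inv hc (ne_of_gt hp0), hs', one_div]
  have key1 : P ≤ s * c + D := by
    have := mink ![c, c] ![x - c, y - c]
    simp only [Fin.sum_univ_two, Matrix.cons_val_zero, Matrix.cons_val_one,
      Matrix.head_cons] at this
    have e1 : c + (x - c) = x := by ring
    have e2 : c + (y - c) = y := by ring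
    rw [e1, e2, abs_of_nonneg hx, abs_of_nonneg hy, ← hP, abs_of_nonneg hc,
      abs_sub_comm x c, abs_sub_comm y c] at this
    refine le_trans this (le_of_eq ?_)
    rw [← h2c, ← two_mul, hD]
  have key2 : s * c ≤ P + D := by
    have := mink ![x, y] ![c - x, c - y]
    simp only [Fin.sum_univ_two, Matrix.cons_val_zero, Matrix.cons_val_one,
      Matrix.head_cons] at this
    have e1 : x + (c - x) = c := by ring
    have e2 : y + (c - y) = c := by ring
    rw [e1, e2, abs_of_nonneg hc, abs_of_nonneg hx, abs_of_nonneg hy, ← hP, ← hD] at this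
    refine le_trans (le_of_eq ?_) this
    rw [← h2c, ← two_mul]
  have hA : ((x ^ p + y ^ p) / 2) ^ p⁻¹ = P / s := by
    rw [hP, hs', ← one_div, ← Real.div_rpow (by positivity) (by norm_num)]
  have habs : |c - P / s| ≤ D / s := by
    have hsne : s ≠ 0 := ne_of_gt hs
    rw [abs_le]
    constructor
    · have e : c - P / s = -((P - s * c) / s) := by field_simp; ring
      rw [e, neg_le_neg_iff]
      exact (div_le_div_iff_of_pos_right hs).mpr (by linarith)
    · have e : c - P / s = (s * c - P) / s := by field_simp
      rw [e]
      exact (div_le_div_iff_of_pos_right hs).mpr (by linarith)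
  have hfin : |c - P / s| ^ p ≤ (|c - x| ^ p + |c - y| ^ p) / 2 := by
    have h1 : |c - P / s| ^ p ≤ (D / s) ^ p :=
      Real.rpow_le_rpow (abs_nonneg _) habs (le_of_lt hp0)
    have h2 : (D / s) ^ p = (|c - x| ^ p + |c - y| ^ p) / 2 := by
      rw [Real.div_rpow hDnn (le_of_lt hs), hD, hs', one_div,
        Real.rpow_inv_rpow (by positivity) (ne_of_gt hp0),
        Real.rpow_inv_rpow (by norm_num) (ne_of_gt hp0)]
    linarith
  rw [hA]
  linarith

/-- Bernoulli-type inequality for rpow. -/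
lemma bern {p : ℝ} (hp : 1 ≤ p) {c t : ℝ} (hc : 0 < c) (ht : 0 ≤ t) :
    c ^ p + p * c ^ (p - 1) * t ≤ (c + t) ^ p := by
  have h1 : (1 : ℝ) + p * (t / c) ≤ (1 + t / c) ^ p :=
    one_add_mul_self_le_rpow_one_add (by have := div_nonneg ht hc.le; linarith) hp
  have h2 : (c + t) ^ p = c ^ p * (1 + t / c) ^ p := by
    rw [← Real.mul_rpow (le_of_lt hc) (by positivity)]
    congr 1
    field_simp
  rw [h2]
  have h3 : c ^ p * (1 + p * (t / c)) ≤ c ^ p * (1 + t / c) ^ p :=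
    mul_le_mul_of_nonneg_left h1 (Real.rpow_nonneg (le_of_lt hc) p)
  refine le_trans (le_of_eq ?_) h3
  have h4 : c ^ (p - 1) = c ^ p / c := by
    rw [Real.rpow_sub hc, Real.rpow_one]
  rw [h4]
  field_simp

/-- Choice of a small positive `t` with `t ≤ b` and `t ^ (p-1) < B`. -/
lemma small_t {p : ℝ} (hp : 1 < p) {b B : ℝ} (hb : 0 < b) (hB : 0 < B) :
    ∃ t : ℝ, 0 < t ∧ t ≤ b ∧ t ^ (p - 1) < B := by
  have hq : 0 < p - 1 := by linarith
  refine ⟨min b ((B / 2) ^ (p - 1)⁻¹), lt_min hb (Real.rpow_pos_of_pos (by positivity) _),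
    min_le_left _ _, ?_⟩
  calc (min b ((B / 2) ^ (p - 1)⁻¹)) ^ (p - 1)
      ≤ ((B / 2) ^ (p - 1)⁻¹) ^ (p - 1) := by
        refine Real.rpow_le_rpow (le_min (le_of_lt hb) (Real.rpow_nonneg (by positivity) _)) 
          (min_le_right _ _) (le_of_lt hq)
    _ = B / 2 := Real.rpow_inv_rpow (by positivity) (ne_of_gt hq)
    _ < B := by linarith



lemma edgeTerm_nonneg {V : Type*} {p : ℝ} {f : V → ℝ} (e : Sym2 V) : 0 ≤ edgeTerm p f e := by
  induction e using Sym2.ind with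
  | _ x y => exact Real.rpow_nonneg (abs_nonneg _) _

lemma rayleigh_nonneg {V : Type*} [Fintype V] [DecidableEq V] (G : SimpleGraph V) (p : ℝ)
    (f : V → ℝ) : 0 ≤ rayleigh G p f :=
  div_nonneg (Finset.sum_nonneg fun e _ => edgeTerm_nonneg e)
    (Finset.sum_nonneg fun v _ => Real.rpow_nonneg (abs_nonneg _) _)

lemma lambda1_le {V : Type*} [Fintype V] [DecidableEq V] (G : SimpleGraph V) (p : ℝ)
    (f : V → ℝ) (h0 : f ≠ 0) (hb : ∀ v, G.degree v = 1 → f v = 0) :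
    lambda1 G p ≤ rayleigh G p f := by
  refine csInf_le ⟨0, ?_⟩ ⟨f, h0, hb, rfl⟩
  rintro r ⟨g, hg0, hgb, rfl⟩
  exact rayleigh_nonneg G p g

lemma exists_minimizer {V : Type*} [Fintype V] [DecidableEq V] (G : SimpleGraph V) {p : ℝ}
    (hp : 1 < p) (v0 : V) (hv0 : G.degree v0 ≠ 1) :
    ∃ f : V → ℝ, (∀ v, 0 ≤ f v) ∧ (∀ v, G.degree v = 1 → f v = 0) ∧
      (∑ v, |f v| ^ p) = 1 ∧ lambda1 G p = ∑ e ∈ G.edgeFinset, edgeTerm p f e := by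
  have hp0 : 0 < p := lt_trans one_pos hp
  set N : (V → ℝ) → ℝ := fun f => ∑ e ∈ G.edgeFinset, edgeTerm p f e with hN
  set M : (V → ℝ) → ℝ := fun f => ∑ v, |f v| ^ p with hM
  have hNcont : Continuous N := by
    refine continuous_finset_sum _ fun e _ => ?_
    induction e using Sym2.ind with
    | _ x y =>
      have : (fun f : V → ℝ => edgeTerm p f s(x, y)) = fun f : V → ℝ => |f x - f y| ^ p := rfl
      rw [this]
      exact (((continuous_apply x).sub (continuous_apply y)).abs).rpow_const
        (fun f => Or.inr (le_of_lt hp0))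
  have hMcont : Continuous M :=
    continuous_finset_sum _ fun v _ =>
      ((continuous_apply v).abs).rpow_const (fun f => Or.inr (le_of_lt hp0))
  set S : Set (V → ℝ) := {f | M f = 1 ∧ ∀ v, G.degree v = 1 → f v = 0} with hS
  have hSclosed : IsClosed S := by
    have h1 : IsClosed {f : V → ℝ | M f = 1} := isClosed_eq hMcont continuous_const
    have h2 : IsClosed {f : V → ℝ | ∀ v, G.degree v = 1 → f v = 0} := by
      have he : {f : V → ℝ | ∀ v, G.degree v = 1 → f v = 0} =
          ⋂ v ∈ {v : V | G.degree v = 1}, {f : V → ℝ | f v = 0} := by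
        ext f; simp
      rw [he]
      exact isClosed_biInter fun v hv => isClosed_eq (continuous_apply v) continuous_const
    exact h1.inter h2
  have hsub : S ⊆ Set.pi Set.univ fun _ : V => Set.Icc (-1 : ℝ) 1 := by
    rintro f ⟨hM1, _⟩ v _
    have h1 : |f v| ^ p ≤ 1 := by
      rw [← hM1]
      exact Finset.single_le_sum (fun w _ => Real.rpow_nonneg (abs_nonneg _) _)
        (Finset.mem_univ v)
    have h2 : |f v| ≤ 1 := by
      by_contra hgt
      push_neg at hgt
      have := (Real.one_lt_rpow_iff_of_pos (lt_trans one_pos hgt)).2 (Or.inl ⟨hgt, hp0⟩)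
      linarith
    exact abs_le.1 h2
  have hcomp : IsCompact S :=
    IsCompact.of_isClosed_subset (isCompact_univ_pi fun _ => isCompact_Icc) hSclosed hsub
  have hf1S : (fun v : V => if v = v0 then (1 : ℝ) else 0) ∈ S := by
    constructor
    · have h : ∀ v : V, |if v = v0 then (1 : ℝ) else 0| ^ p = if v = v0 then (1 : ℝ) else 0 := by
        intro v
        by_cases h : v = v0 <;> simp [h, Real.zero_rpow (ne_of_gt hp0)]
      show (∑ v, |if v = v0 then (1 : ℝ) else 0| ^ p) = 1
      rw [Finset.sum_congr rfl fun v _ => h v, Finset.sum_ite_eq' Finset.univ v0 fun _ => (1 : ℝ)]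
      simp
    · intro v hv
      have : v ≠ v0 := fun h => hv0 (h ▸ hv)
      simp [this]
  obtain ⟨g, hgS, hgmin⟩ := hcomp.exists_isMinOn ⟨_, hf1S⟩ hNcont.continuousOn
  set f : V → ℝ := fun v => |g v| with hf
  have hfS : f ∈ S := by
    constructor
    · show (∑ v, |f v| ^ p) = 1
      have : ∀ v : V, |f v| ^ p = |g v| ^ p := fun v => by rw [hf]; simp [abs_abs]
      rw [Finset.sum_congr rfl fun v _ => this v]
      exact hgS.1
    · intro v hv
      rw [hf]; simp [hgS.2 v hv]
  have hNfg : N f = N g := by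
    refine le_antisymm ?_ (isMinOn_iff.1 hgmin f hfS)
    refine Finset.sum_le_sum fun e _ => ?_
    induction e using Sym2.ind with
    | _ x y =>
      show |f x - f y| ^ p ≤ |g x - g y| ^ p
      exact Real.rpow_le_rpow (abs_nonneg _) (abs_abs_sub_abs_le_abs_sub _ _) (le_of_lt hp0)
  have hfne : f ≠ 0 := by
    intro h
    have hM1 : M (0 : V → ℝ) = 1 := h ▸ hfS.1
    have hM0 : M (0 : V → ℝ) = 0 := by
      show (∑ v : V, |(0 : V → ℝ) v| ^ p) = 0
      simp [Real.zero_rpow (ne_of_gt hp0)]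
    rw [hM0] at hM1
    exact one_ne_zero hM1.symm
  have key : ∀ f' : V → ℝ, f' ≠ 0 → (∀ v, G.degree v = 1 → f' v = 0) →
      N f ≤ rayleigh G p f' := by
    intro f' h0' hb'
    have hM'pos : 0 < M f' := by
      obtain ⟨v, hv⟩ : ∃ v, f' v ≠ 0 := by
        by_contra h
        push_neg at h
        exact h0' (funext h)
      refine Finset.sum_pos' (fun w _ => Real.rpow_nonneg (abs_nonneg _) _)
        ⟨v, Finset.mem_univ v, Real.rpow_pos_of_pos (abs_pos.2 hv) _⟩
    set c : ℝ := (M f') ^ p⁻¹ with hc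
    have hcpos : 0 < c := Real.rpow_pos_of_pos hM'pos _
    have hcp : c ^ p = M f' := Real.rpow_inv_rpow (le_of_lt hM'pos) (ne_of_gt hp0)
    set g' : V → ℝ := fun v => f' v / c with hg'
    have habs : ∀ z : ℝ, |z / c| ^ p = |z| ^ p / M f' := by
      intro z
      rw [abs_div, abs_of_pos hcpos, Real.div_rpow (abs_nonneg _) (le_of_lt hcpos), hcp]
    have hg'M : M g' = 1 := by
      show (∑ v, |f' v / c| ^ p) = 1
      rw [Finset.sum_congr rfl fun v _ => habs (f' v), ← Finset.sum_div]
      exact div_self (ne_of_gt hM'pos)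
    have hg'S : g' ∈ S := ⟨hg'M, fun v hv => by rw [hg']; simp [hb' v hv]⟩
    have hg'N : N g' = N f' / M f' := by
      show (∑ e ∈ G.edgeFinset, edgeTerm p g' e) = (∑ e ∈ G.edgeFinset, edgeTerm p f' e) / M f'
      rw [Finset.sum_div]
      refine Finset.sum_congr rfl fun e _ => ?_
      induction e using Sym2.ind with
      | _ x y =>
        show |f' x / c - f' y / c| ^ p = |f' x - f' y| ^ p / M f'
        rw [div_sub_div_same, habs]
    calc N f = N g := hNfg
      _ ≤ N g' := isMinOn_iff.1 hgmin g' hg'S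
      _ = N f' / M f' := hg'N
      _ = rayleigh G p f' := rfl
  refine ⟨f, fun v => abs_nonneg _, hfS.2, hfS.1, ?_⟩
  refine le_antisymm ?_ ?_
  · refine csInf_le ⟨0, ?_⟩ ⟨f, hfne, hfS.2, ?_⟩
    · rintro r ⟨g'', hg0, hgb, rfl⟩
      exact rayleigh_nonneg G p g''
    · show N f = rayleigh G p f
      have : rayleigh G p f = N f / M f := rfl
      rw [this, hfS.1, div_one]
  · refine le_csInf ⟨rayleigh G p f, f, hfne, hfS.2, rfl⟩ ?_
    rintro r ⟨f', h0', hb', rfl⟩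
    exact key f' h0' hb'

lemma sum_split3 (m : ℕ) (hm : 3 ≤ m) (g : ℕ → ℝ) :
    ∑ k ∈ Finset.range m, g k = g 0 + g 1 + g 2 + ∑ k ∈ Finset.Ico 3 m, g k := by
  rw [Finset.range_eq_Ico, ← Finset.sum_Ico_consecutive g (by omega : (0:ℕ) ≤ 3) hm]
  congr 1
  rw [← Finset.range_eq_Ico]
  simp [Finset.sum_range_succ]

lemma sum_twiddle (s : Finset ℕ) (g g' : ℕ → ℝ) (m1 m2 : ℕ) (h1 : m1 ∈ s) (h2 : m2 ∈ s)
    (hne : m1 ≠ m2) (hag : ∀ k ∈ s, k ≠ m1 → k ≠ m2 → g' k = g k) :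
    ∑ k ∈ s, g' k = ∑ k ∈ s, g k + (g' m1 - g m1) + (g' m2 - g m2) := by
  rw [← Finset.add_sum_erase s g' h1, ← Finset.add_sum_erase s g h1]
  have h2' : m2 ∈ s.erase m1 := Finset.mem_erase.2 ⟨hne.symm, h2⟩
  rw [← Finset.add_sum_erase _ g' h2', ← Finset.add_sum_erase _ g h2']
  have he : ∑ k ∈ (s.erase m1).erase m2, g' k = ∑ k ∈ (s.erase m1).erase m2, g k :=
    Finset.sum_congr rfl fun k hk => by
      rw [Finset.mem_erase, Finset.mem_erase] at hk
      exact hag k hk.2.2 hk.2.1 hk.1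
  rw [he]; ring

lemma sum_twiddle1 (s : Finset ℕ) (g g' : ℕ → ℝ) (m1 : ℕ) (h1 : m1 ∈ s)
    (hag : ∀ k ∈ s, k ≠ m1 → g' k = g k) :
    ∑ k ∈ s, g' k = ∑ k ∈ s, g k + (g' m1 - g m1) := by
  rw [← Finset.add_sum_erase s g' h1, ← Finset.add_sum_erase s g h1]
  have he : ∑ k ∈ s.erase m1, g' k = ∑ k ∈ s.erase m1, g k :=
    Finset.sum_congr rfl fun k hk => hag k (Finset.mem_erase.1 hk).2 (Finset.mem_erase.1 hk).1
  rw [he]; ring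

section T3

/-- Energy of the folded test function on `T_{n,3}`. -/
lemma T3_energy [NeZero n] (hn : 5 ≤ n) {p : ℝ} (hp0 : 0 < p) (a : ℕ → ℝ) (u w : ℝ) :
    (∑ e ∈ (tadpole n 3).edgeFinset,
      edgeTerm p (fun v : Fin n => if v.val ≤ 1 then u else if v.val = 2 then w else a v.val) e)
    = |u - w| ^ p * 2 + |w - a 3| ^ p + ∑ k ∈ Finset.Ico 3 (n-1), |a k - a (k+1)| ^ p := by
  set H : ℕ → ℝ := fun k => if k ≤ 1 then u else if k = 2 then w else a k with hH
  have h0 : H 0 = u := by simp [hH]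
  have h1 : H 1 = u := by simp [hH]
  have h2 : H 2 = w := by simp [hH]
  have hHk : ∀ k, 3 ≤ k → H k = a k := fun k hk => by
    simp only [hH]; rw [if_neg (by omega), if_neg (by omega)]
  have hfun : (fun v : Fin n => if v.val ≤ 1 then u else if v.val = 2 then w else a v.val)
      = fun v : Fin n => H v.val := rfl
  rw [hfun, energy_eval (by norm_num) (by omega) p H]
  rw [sum_split3 (n-1) (by omega) (fun k => |H k - H (k+1)| ^ p)]
  have htail : ∑ k ∈ Finset.Ico 3 (n-1), |H k - H (k+1)| ^ p
      = ∑ k ∈ Finset.Ico 3 (n-1), |a k - a (k+1)| ^ p := by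
    refine Finset.sum_congr rfl fun k hk => ?_
    rw [Finset.mem_Ico] at hk
    rw [hHk k (by omega), hHk (k+1) (by omega)]
  rw [htail]
  rw [show (3:ℕ) - 1 = 2 from rfl, h0, h1, h2, hHk 3 (le_refl 3), sub_self, abs_zero,
    Real.zero_rpow (ne_of_gt hp0)]
  ring

/-- Mass of the folded test function on `Fin n`. -/
lemma T3_mass [NeZero n] (hn : 5 ≤ n) (p : ℝ) (a : ℕ → ℝ) (u w : ℝ) :
    (∑ v : Fin n, |if v.val ≤ 1 then u else if v.val = 2 then w else a v.val| ^ p)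
    = |u| ^ p * 2 + |w| ^ p + ∑ k ∈ Finset.Ico 3 n, |a k| ^ p := by
  set H : ℕ → ℝ := fun k => if k ≤ 1 then u else if k = 2 then w else a k with hH
  have h0 : H 0 = u := by simp [hH]
  have h1 : H 1 = u := by simp [hH]
  have h2 : H 2 = w := by simp [hH]
  have hHk : ∀ k, 3 ≤ k → H k = a k := fun k hk => by
    simp only [hH]; rw [if_neg (by omega), if_neg (by omega)]
  have : (∑ v : Fin n, |H v.val| ^ p) = ∑ k ∈ Finset.range n, |H k| ^ p :=
    Fin.sum_univ_eq_sum_range (fun k => |H k| ^ p) n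
  rw [show (∑ v : Fin n, |if v.val ≤ 1 then u else if v.val = 2 then w else a v.val| ^ p)
    = ∑ v : Fin n, |H v.val| ^ p from rfl, this,
    sum_split3 n (by omega) (fun k => |H k| ^ p)]
  have htail : ∑ k ∈ Finset.Ico 3 n, |H k| ^ p = ∑ k ∈ Finset.Ico 3 n, |a k| ^ p := by
    refine Finset.sum_congr rfl fun k hk => ?_
    rw [Finset.mem_Ico] at hk
    rw [hHk k (by omega)]
  rw [htail, h0, h1, h2]
  ring

end T3

end TadAux

set_option maxHeartbeats 2000000 in
open TadAux in
/-- Comparison of the first `p`-Dirichlet eigenvalues of `T_{n,4}` and `T_{n,3}`. -/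
theorem tadpole_four_gt_tadpole_three (n : ℕ) (hn : 5 ≤ n) {p : ℝ} (hp : 1 < p) :
    lambda1 (tadpole n 4) p > lambda1 (tadpole n 3) p := by
  haveI : NeZero n := ⟨by omega⟩
  have hp0 : 0 < p := lt_trans one_pos hp
  have hp1 : 1 ≤ p := le_of_lt hp
  have nn : ∀ z : ℝ, 0 ≤ |z| ^ p := fun z => Real.rpow_nonneg (abs_nonneg z) p
  obtain ⟨f, hf0, hfb, hfM, hfl⟩ := exists_minimizer (tadpole n 4) hp (cf n 0)
    (degree_ne_one (by norm_num) (by omega)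
      (by rw [cf_val (show 0 < n by omega)]; omega))
  set a : ℕ → ℝ := fun k => f (cf n k) with ha
  have hfa : f = fun v : Fin n => a v.val := funext fun v => (congrArg f (cf_self v)).symm
  have ha0 : ∀ k, 0 ≤ a k := fun k => hf0 _
  have halast : a (n-1) = 0 := hfb _ (degree_last (by norm_num) (by omega) hn)
  set T : ℝ := ∑ k ∈ Finset.Ico 3 (n-1), |a k - a (k+1)| ^ p with hT
  set SM : ℝ := ∑ k ∈ Finset.Ico 3 n, |a k| ^ p with hSM
  have hT0 : 0 ≤ T := Finset.sum_nonneg fun k _ => nn _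
  have hSM0 : 0 ≤ SM := Finset.sum_nonneg fun k _ => nn _
  set N4 : ℝ := (∑ k ∈ Finset.range (n-1), |a k - a (k+1)| ^ p) + |a 0 - a 3| ^ p with hN4
  have hlam4 : lambda1 (tadpole n 4) p = N4 := by
    rw [hfl, hfa, energy_eval (by norm_num) (by omega) p a, hN4]
  have hmass4 : (∑ k ∈ Finset.range n, |a k| ^ p) = 1 := by
    rw [← Fin.sum_univ_eq_sum_range (fun k => |a k| ^ p) n, ← hfM]
    exact Finset.sum_congr rfl fun v _ => by rw [hfa]
  have hNsplit : N4 = |a 0 - a 1| ^ p + |a 1 - a 2| ^ p + |a 2 - a 3| ^ p + T + |a 0 - a 3| ^ p := by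
    rw [hN4, sum_split3 (n-1) (by omega) (fun k => |a k - a (k+1)| ^ p), hT]
  have hMsplit : |a 0| ^ p + |a 1| ^ p + |a 2| ^ p + SM = 1 := by
    rw [← hmass4, sum_split3 n (by omega) (fun k => |a k| ^ p), hSM]
  have habs : ∀ k, |a k| = a k := fun k => abs_of_nonneg (ha0 k)
  have hM1 : a 0 ^ p + a 1 ^ p + a 2 ^ p + SM = 1 := by
    rw [← habs 0, ← habs 1, ← habs 2]; exact hMsplit
  set A : ℝ := ((a 0 ^ p + a 2 ^ p) / 2) ^ p⁻¹ with hA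
  have hrp : ∀ k, 0 ≤ a k ^ p := fun k => Real.rpow_nonneg (ha0 k) p
  have hAp : A ^ p = (a 0 ^ p + a 2 ^ p) / 2 := by
    rw [hA]
    exact Real.rpow_inv_rpow (by linarith [hrp 0, hrp 2]) (ne_of_gt hp0)
  have hA0 : 0 ≤ A := Real.rpow_nonneg (by linarith [hrp 0, hrp 2]) _
  have hcyc : 2 * |a 1 - A| ^ p + 2 * |a 3 - A| ^ p ≤
      |a 0 - a 1| ^ p + |a 1 - a 2| ^ p + |a 2 - a 3| ^ p + |a 0 - a 3| ^ p := by
    have m1 := fold_ineq hp1 (ha0 0) (ha0 2) (ha0 1)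
    have m2 := fold_ineq hp1 (ha0 0) (ha0 2) (ha0 3)
    rw [abs_sub_comm (a 1) (a 0)] at m1
    rw [abs_sub_comm (a 3) (a 0), abs_sub_comm (a 3) (a 2)] at m2
    rw [hA]
    linarith
  have hN4nn : 0 ≤ N4 := by
    rw [hNsplit]
    have := nn (a 0 - a 1); have := nn (a 1 - a 2); have := nn (a 2 - a 3)
    have := nn (a 0 - a 3)
    linarith
  have hN4pos : 0 < N4 := by
    rcases lt_or_eq_of_le hN4nn with h | h
    · exact h
    exfalso
    have hps : (∑ k ∈ Finset.range (n-1), |a k - a (k+1)| ^ p) = 0 := by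
      have h1 : 0 ≤ ∑ k ∈ Finset.range (n-1), |a k - a (k+1)| ^ p :=
        Finset.sum_nonneg fun k _ => nn _
      have h2 := nn (a 0 - a 3)
      rw [hN4] at h
      linarith
    have hstep : ∀ k, k < n-1 → a k = a (k+1) := by
      intro k hk
      have h1 := (Finset.sum_eq_zero_iff_of_nonneg fun k _ => nn (a k - a (k+1))).1 hps k
        (Finset.mem_range.2 hk)
      have h2 : |a k - a (k+1)| = 0 := rpow_eq_zero_of hp0 (abs_nonneg _) h1
      have := abs_eq_zero.1 h2
      linarith
    have hallm : ∀ m, m ≤ n-1 → a (n-1-m) = 0 := by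
      intro m
      induction m with
      | zero => intro _; simpa using halast
      | succ m ih =>
        intro hm
        have e : n-1-(m+1)+1 = n-1-m := by omega
        have h2 := hstep (n-1-(m+1)) (by omega)
        rw [e] at h2
        rw [h2]
        exact ih (by omega)
    have hzero : ∑ k ∈ Finset.range n, |a k| ^ p = 0 :=
      Finset.sum_eq_zero fun k hk => by
        have hk' := Finset.mem_range.1 hk
        have h1 := hallm (n-1-k) (by omega)
        rw [show n-1-(n-1-k) = k by omega] at h1
        rw [h1, abs_zero, Real.zero_rpow (ne_of_gt hp0)]
    rw [hmass4] at hzero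
    exact one_ne_zero hzero
  -- admissibility of T3 test functions
  have hadm3 : ∀ u w : ℝ, ∀ v : Fin n, (tadpole n 3).degree v = 1 →
      (fun v : Fin n => if v.val ≤ 1 then u else if v.val = 2 then w else a v.val) v = 0 := by
    intro u w v hv
    by_cases hvl : v.val < n - 1
    · exact absurd hv (degree_ne_one (by norm_num) (by omega) hvl)
    · have hvn : v.val = n-1 := by have := v.isLt; omega
      show (if v.val ≤ 1 then u else if v.val = 2 then w else a v.val) = 0
      rw [if_neg (by omega), if_neg (by omega), hvn]
      exact halast
  have hne3 : ∀ u w : ℝ, 0 < |u| ^ p * 2 + |w| ^ p + SM →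
      (fun v : Fin n => if v.val ≤ 1 then u else if v.val = 2 then w else a v.val) ≠ 0 := by
    intro u w hpos h0
    have hsum : (∑ v : Fin n, |if v.val ≤ 1 then u else if v.val = 2 then w else a v.val| ^ p)
        = 0 := by
      refine Finset.sum_eq_zero fun v _ => ?_
      have := congrFun h0 v
      simp only [Pi.zero_apply] at this
      rw [this, abs_zero, Real.zero_rpow (ne_of_gt hp0)]
    rw [T3_mass hn p a u w, ← hSM] at hsum
    rw [hsum] at hpos
    exact lt_irrefl 0 hpos
  have hray3 : ∀ u w : ℝ, rayleigh (tadpole n 3) p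
      (fun v : Fin n => if v.val ≤ 1 then u else if v.val = 2 then w else a v.val)
      = (|u - w| ^ p * 2 + |w - a 3| ^ p + T) / (|u| ^ p * 2 + |w| ^ p + SM) := by
    intro u w
    have hnum := T3_energy hn hp0 a u w
    have hden := T3_mass hn p a u w
    simp only [rayleigh]
    rw [hnum, hden, ← hT, ← hSM]
  rw [hlam4]
  rcases lt_or_ge (a 1) A with hbA | hAb
  · -- Case I : a 1 < A
    have hApos : 0 < A := lt_of_le_of_lt (ha0 1) hbA
    have hD3 : 1 < |A| ^ p * 2 + |A| ^ p + SM := by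
      have h1 : a 1 ^ p < A ^ p := Real.rpow_lt_rpow (ha0 1) hbA hp0
      rw [abs_of_nonneg hA0]
      linarith [hAp, hM1]
    refine lt_of_le_of_lt (lambda1_le _ p _ (hne3 A A (by linarith)) (hadm3 A A)) ?_
    rw [hray3 A A]
    have hnum : |A - A| ^ p * 2 + |A - a 3| ^ p + T ≤ N4 := by
      rw [sub_self, abs_zero, Real.zero_rpow (ne_of_gt hp0), abs_sub_comm A (a 3), hNsplit]
      have h2 := nn (a 3 - A)
      have h3 := nn (a 1 - A)
      linarith [hcyc]
    have hD3pos : (0:ℝ) < |A| ^ p * 2 + |A| ^ p + SM := by linarith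
    calc (|A - A| ^ p * 2 + |A - a 3| ^ p + T) / (|A| ^ p * 2 + |A| ^ p + SM)
        ≤ N4 / (|A| ^ p * 2 + |A| ^ p + SM) := (div_le_div_iff_of_pos_right hD3pos).mpr hnum
      _ < N4 := by
          rw [div_lt_iff₀ hD3pos]
          nlinarith [mul_pos hN4pos (sub_pos.mpr hD3)]
  · rcases ne_or_eq A (a 3) with hAd | hAd
    · -- Case II : A ≤ a 1, A ≠ a 3
      have hD3ge : 1 ≤ |a 1| ^ p * 2 + |A| ^ p + SM := by
        have h1 : A ^ p ≤ a 1 ^ p := Real.rpow_le_rpow hA0 hAb (le_of_lt hp0)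
        rw [abs_of_nonneg hA0, habs 1]
        linarith [hAp, hM1]
      refine lt_of_le_of_lt
        (lambda1_le _ p _ (hne3 (a 1) A (by linarith)) (hadm3 (a 1) A)) ?_
      rw [hray3 (a 1) A]
      have hAd3 : 0 < |a 3 - A| ^ p :=
        Real.rpow_pos_of_pos (abs_pos.2 (sub_ne_zero.2 (Ne.symm hAd))) p
      have hnum : |a 1 - A| ^ p * 2 + |A - a 3| ^ p + T < N4 := by
        rw [hNsplit, abs_sub_comm A (a 3)]
        linarith [hcyc, hAd3]
      have hnn3 : 0 ≤ |a 1 - A| ^ p * 2 + |A - a 3| ^ p + T := by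
        have := nn (a 1 - A); have := nn (A - a 3); linarith
      calc (|a 1 - A| ^ p * 2 + |A - a 3| ^ p + T) / (|a 1| ^ p * 2 + |A| ^ p + SM)
          ≤ |a 1 - A| ^ p * 2 + |A - a 3| ^ p + T := div_le_self hnn3 hD3ge
        _ < N4 := hnum
    · rcases eq_or_lt_of_le hAb with heq | hlt
      · -- a 1 = A and a 3 = A
        rcases eq_or_lt_of_le hA0 with hc0 | hcpos
        · -- IVb : A = 0, contradiction with minimality
          exfalso
          have hA0' : A = 0 := hc0.symm
          have hap0 : a 0 ^ p + a 2 ^ p = 0 := by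
            rw [hA0', Real.zero_rpow (ne_of_gt hp0)] at hAp
            linarith
          have h00 : a 0 = 0 := rpow_eq_zero_of hp0 (ha0 0) (by linarith [hrp 0, hrp 2])
          have h20 : a 2 = 0 := rpow_eq_zero_of hp0 (ha0 2) (by linarith [hrp 0, hrp 2])
          have h10 : a 1 = 0 := by rw [← heq, hA0']
          have h30 : a 3 = 0 := by rw [← hAd, hA0']
          have hex : ∃ k, k < n ∧ a k ≠ 0 := by
            by_contra hno
            push_neg at hno
            have hzero : ∑ k ∈ Finset.range n, |a k| ^ p = 0 :=
              Finset.sum_eq_zero fun k hk => by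
                rw [hno k (Finset.mem_range.1 hk), abs_zero, Real.zero_rpow (ne_of_gt hp0)]
            rw [hmass4] at hzero
            exact one_ne_zero hzero
          have hex' : ∃ k, a k ≠ 0 := ⟨hex.choose, hex.choose_spec.2⟩
          set j := Nat.find hex' with hj
          have hjspec : a j ≠ 0 := Nat.find_spec hex'
          have hjmin : ∀ m, m < j → a m = 0 := fun m hm => not_ne_iff.1 (Nat.find_min hex' hm)
          have hjle : j < n := lt_of_le_of_lt (Nat.find_min' hex' hex.choose_spec.2)
            hex.choose_spec.1
          have hj4 : 4 ≤ j := by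
            by_contra hlt4
            push_neg at hlt4
            have : a j = 0 := by
              rcases (by omega : j = 0 ∨ j = 1 ∨ j = 2 ∨ j = 3) with h|h|h|h <;> rw [h] <;>
                assumption
            exact hjspec this
          have hjn2 : j ≤ n - 2 := by
            have : j ≠ n-1 := fun h => hjspec (h ▸ halast)
            omega
          have haj : 0 < a j := lt_of_le_of_ne (ha0 j) (Ne.symm hjspec)
          have hB : 0 < (p/2) * (a j / 2) ^ (p-1) := by
            have h1 : 0 < (a j / 2) ^ (p-1) := Real.rpow_pos_of_pos (by linarith) _
            have h2 : 0 < p/2 := by linarith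
            exact mul_pos h2 h1
          obtain ⟨t, ht0, htle, htp⟩ := small_t hp (show 0 < a j / 2 by linarith) hB
          set H' : ℕ → ℝ := fun k => if k = j-1 then t else a k with hH'
          have hH'val : ∀ k, k ≠ j-1 → H' k = a k := fun k hk => by
            simp only [hH']; rw [if_neg hk]
          have hH'j1 : H' (j-1) = t := by simp [hH']
          have hF'adm : ∀ v : Fin n, (tadpole n 4).degree v = 1 →
              (fun v : Fin n => H' v.val) v = 0 := by
            intro v hv
            by_cases hvl : v.val < n - 1
            · exact absurd hv (degree_ne_one (by norm_num) (by omega) hvl)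
            · have hvn : v.val = n-1 := by have := v.isLt; omega
              show H' v.val = 0
              rw [hvn, hH'val (n-1) (by omega)]
              exact halast
          have hF'ne : (fun v : Fin n => H' v.val) ≠ 0 := by
            intro h0
            have h1 := congrFun h0 (cf n j)
            simp only [Pi.zero_apply] at h1
            have h2 : H' ((cf n j).val) = 0 := h1
            rw [cf_val hjle, hH'val j (by omega)] at h2
            exact hjspec h2
          have hE'nn : 0 ≤ ∑ e ∈ (tadpole n 4).edgeFinset,
              edgeTerm p (fun v : Fin n => H' v.val) e :=
            Finset.sum_nonneg fun e _ => edgeTerm_nonneg e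
          have hE' : ∑ e ∈ (tadpole n 4).edgeFinset, edgeTerm p (fun v : Fin n => H' v.val) e
              = (∑ k ∈ Finset.range (n-1), |H' k - H' (k+1)| ^ p) + |H' 0 - H' 3| ^ p := by
            rw [energy_eval (by norm_num) (by omega) p H']
          have hsum' : (∑ k ∈ Finset.range (n-1), |H' k - H' (k+1)| ^ p)
              = (∑ k ∈ Finset.range (n-1), |a k - a (k+1)| ^ p)
                + (|H' (j-2) - H' (j-1)| ^ p - |a (j-2) - a (j-1)| ^ p)
                + (|H' (j-1) - H' j| ^ p - |a (j-1) - a j| ^ p) := by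
            have h1 := sum_twiddle (Finset.range (n-1)) (fun k => |a k - a (k+1)| ^ p)
              (fun k => |H' k - H' (k+1)| ^ p) (j-2) (j-1) (Finset.mem_range.2 (by omega))
              (Finset.mem_range.2 (by omega)) (by omega)
              (fun k _ hk1 hk2 => by
                show |H' k - H' (k+1)| ^ p = |a k - a (k+1)| ^ p
                rw [hH'val k (by omega), hH'val (k+1) (by omega)])
            rw [h1]
            beta_reduce
            rw [show j-2+1 = j-1 by omega, show j-1+1 = j by omega]
          have v1 : |H' (j-2) - H' (j-1)| ^ p = t ^ p := by
            rw [hH'val (j-2) (by omega), hjmin (j-2) (by omega), hH'j1, zero_sub, abs_neg,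
              abs_of_pos ht0]
          have v2 : |a (j-2) - a (j-1)| ^ p = 0 := by
            rw [hjmin (j-2) (by omega), hjmin (j-1) (by omega), sub_self, abs_zero,
              Real.zero_rpow (ne_of_gt hp0)]
          have v3 : |H' (j-1) - H' j| ^ p = (a j - t) ^ p := by
            rw [hH'j1, hH'val j (by omega), abs_sub_comm, abs_of_nonneg (by linarith)]
          have v4 : |a (j-1) - a j| ^ p = a j ^ p := by
            rw [hjmin (j-1) (by omega), zero_sub, abs_neg, abs_of_nonneg (ha0 j)]
          have v5 : |H' 0 - H' 3| ^ p ≤ t ^ p := by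
            rw [hH'val 0 (by omega), h00]
            by_cases h3j : (3:ℕ) = j - 1
            · rw [h3j, hH'j1, zero_sub, abs_neg, abs_of_pos ht0]
            · rw [hH'val 3 h3j, h30, sub_self, abs_zero, Real.zero_rpow (ne_of_gt hp0)]
              exact Real.rpow_nonneg (le_of_lt ht0) p
          have v6 : |a 0 - a 3| ^ p = 0 := by
            rw [h00, h30, sub_self, abs_zero, Real.zero_rpow (ne_of_gt hp0)]
          have hbj : (a j - t) ^ p + p * (a j - t) ^ (p-1) * t ≤ a j ^ p := by
            have h1 := bern hp1 (show 0 < a j - t by linarith) (le_of_lt ht0)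
            rw [sub_add_cancel] at h1
            exact h1
          have hmono : (a j / 2) ^ (p-1) ≤ (a j - t) ^ (p-1) :=
            Real.rpow_le_rpow (by linarith) (by linarith) (by linarith)
          have htpp : t ^ p = t ^ (p-1) * t := by
            have he : p - 1 + 1 = p := by ring
            conv_lhs => rw [← he]
            rw [Real.rpow_add ht0, Real.rpow_one]
          have hfin : 2 * t ^ p < p * (a j - t) ^ (p-1) * t := by
            have h1 : t ^ (p-1) * t < ((p/2) * (a j / 2) ^ (p-1)) * t :=
              mul_lt_mul_of_pos_right htp ht0
            rw [← htpp] at h1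
            have h2 : ((p/2) * (a j / 2) ^ (p-1)) * t ≤ ((p/2) * (a j - t) ^ (p-1)) * t :=
              mul_le_mul_of_nonneg_right
                (mul_le_mul_of_nonneg_left hmono (by linarith)) (le_of_lt ht0)
            linarith
          have hM' : (∑ v : Fin n, |H' v.val| ^ p) = 1 + t ^ p := by
            have h1 : (∑ v : Fin n, |H' v.val| ^ p) = ∑ k ∈ Finset.range n, |H' k| ^ p :=
              Fin.sum_univ_eq_sum_range (fun k => |H' k| ^ p) n
            rw [h1, sum_twiddle1 (Finset.range n) (fun k => |a k| ^ p) (fun k => |H' k| ^ p)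
              (j-1) (Finset.mem_range.2 (by omega)) (fun k _ hkne => by
                show |H' k| ^ p = |a k| ^ p
                rw [hH'val k hkne])]
            beta_reduce
            rw [hmass4, hH'j1, hjmin (j-1) (by omega), abs_of_pos ht0, abs_zero,
              Real.zero_rpow (ne_of_gt hp0)]
            ring
          have hN4' : N4 = ∑ k ∈ Finset.range (n-1), |a k - a (k+1)| ^ p := by
            rw [hN4, v6, add_zero]
          have hE'lt : ∑ e ∈ (tadpole n 4).edgeFinset,
              edgeTerm p (fun v : Fin n => H' v.val) e < N4 := by
            rw [hE', hsum', v1, v2, v3, v4, ← hN4']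
            linarith [v5, hbj, hfin]
          have hray' : rayleigh (tadpole n 4) p (fun v : Fin n => H' v.val) < N4 := by
            have hden : (1:ℝ) ≤ 1 + t ^ p := by
              have := Real.rpow_nonneg (le_of_lt ht0) p
              linarith
            have heq2 : rayleigh (tadpole n 4) p (fun v : Fin n => H' v.val)
                = (∑ e ∈ (tadpole n 4).edgeFinset,
                    edgeTerm p (fun v : Fin n => H' v.val) e) / (1 + t ^ p) := by
              simp only [rayleigh]
              rw [hM']
            rw [heq2]
            calc (∑ e ∈ (tadpole n 4).edgeFinset,
                    edgeTerm p (fun v : Fin n => H' v.val) e) / (1 + t ^ p)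
                ≤ ∑ e ∈ (tadpole n 4).edgeFinset, edgeTerm p (fun v : Fin n => H' v.val) e :=
                  div_le_self hE'nn hden
              _ < N4 := hE'lt
          have hge := lambda1_le (tadpole n 4) p (fun v : Fin n => H' v.val) hF'ne hF'adm
          rw [hlam4] at hge
          linarith
        · -- IVa : a 1 = A = a 3, A > 0
          have hA1p : 0 < A ^ (p-1) := Real.rpow_pos_of_pos hcpos _
          obtain ⟨t, ht0, _, htp⟩ := small_t hp one_pos
            (show 0 < p * A ^ (p-1) * N4 from mul_pos (mul_pos hp0 hA1p) hN4pos)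
          have hSMval : SM = 1 - 3 * A ^ p := by
            have h1 : a 1 ^ p = A ^ p := by rw [← heq]
            linarith [hAp, hM1]
          have hbern := bern hp1 hcpos (le_of_lt ht0)
          have hden2pos : (0:ℝ) < 1 + 2 * (p * A ^ (p-1)) * t := by
            have : 0 < p * A ^ (p-1) * t := mul_pos (mul_pos hp0 hA1p) ht0
            linarith
          have hD3 : 1 + 2 * (p * A ^ (p-1)) * t ≤ |A + t| ^ p * 2 + |A| ^ p + SM := by
            rw [abs_of_nonneg (by linarith : (0:ℝ) ≤ A + t), abs_of_nonneg hA0, hSMval]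
            linarith [hbern]
          have hnum : |A + t - A| ^ p * 2 + |A - a 3| ^ p + T = t ^ p * 2 + T := by
            rw [add_sub_cancel_left, abs_of_nonneg (le_of_lt ht0), ← hAd, sub_self, abs_zero,
              Real.zero_rpow (ne_of_gt hp0)]
            ring
          have hTN4 : T ≤ N4 := by
            rw [hNsplit]
            have := nn (a 0 - a 1); have := nn (a 1 - a 2); have := nn (a 2 - a 3)
            have := nn (a 0 - a 3)
            linarith
          have htpp : t ^ p = t ^ (p-1) * t := by
            have he : p - 1 + 1 = p := by ring
            conv_lhs => rw [← he]
            rw [Real.rpow_add ht0, Real.rpow_one]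
          have hkey : N4 + 2 * t ^ p < N4 * (1 + 2 * (p * A ^ (p-1)) * t) := by
            have h1 : t ^ (p-1) * t < (p * A ^ (p-1) * N4) * t :=
              mul_lt_mul_of_pos_right htp ht0
            rw [← htpp] at h1
            linarith
          have htpnn : 0 ≤ t ^ p := Real.rpow_nonneg (le_of_lt ht0) p
          refine lt_of_le_of_lt
            (lambda1_le _ p _ (hne3 (A + t) A (by linarith)) (hadm3 (A + t) A)) ?_
          rw [hray3 (A + t) A, hnum]
          calc (t ^ p * 2 + T) / (|A + t| ^ p * 2 + |A| ^ p + SM)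
              ≤ (N4 + 2 * t ^ p) / (1 + 2 * (p * A ^ (p-1)) * t) := by
                refine div_le_div₀ (by linarith) (by linarith) hden2pos hD3
            _ < N4 := by
                rw [div_lt_iff₀ hden2pos]
                linarith [hkey]
      · -- Case III : A < a 1, A = a 3
        have hD3 : 1 < |a 1| ^ p * 2 + |A| ^ p + SM := by
          have h1 : A ^ p < a 1 ^ p := Real.rpow_lt_rpow hA0 hlt hp0
          rw [abs_of_nonneg hA0, habs 1]
          linarith [hAp, hM1]
        refine lt_of_le_of_lt
          (lambda1_le _ p _ (hne3 (a 1) A (by linarith)) (hadm3 (a 1) A)) ?_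
        rw [hray3 (a 1) A]
        have hnum : |a 1 - A| ^ p * 2 + |A - a 3| ^ p + T ≤ N4 := by
          rw [← hAd, sub_self, abs_zero, Real.zero_rpow (ne_of_gt hp0), hNsplit]
          have h2 := nn (a 3 - A)
          linarith [hcyc]
        have hD3pos : (0:ℝ) < |a 1| ^ p * 2 + |A| ^ p + SM := by linarith
        calc (|a 1 - A| ^ p * 2 + |A - a 3| ^ p + T) / (|a 1| ^ p * 2 + |A| ^ p + SM)
            ≤ N4 / (|a 1| ^ p * 2 + |A| ^ p + SM) := (div_le_div_iff_of_pos_right hD3pos).mpr hnum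
          _ < N4 := by
              rw [div_lt_iff₀ hD3pos]
              nlinarith [mul_pos hN4pos (sub_pos.mpr hD3)]
end
end
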